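/- arXiv:1011.1611 — 5 statements merged into one kernel-verified Lean document; each statement's English description precedes it below -/
import Mathlib

section
/- For every covering map p : X̃ → X with p(x̃) = x, the small loop group π₁ˢ(X, x) is contained in the image p₋(π₁(X̃, x̃)) of the fundamental group of the covering space. -/
open CategoryTheory Topology

attribute [local instance] Path.Homotopic.setoid

noncomputable section

variable {X Y E : Type*} [TopologicalSpace X] [TopologicalSpace Y] [TopologicalSpace E]

/-- Build an element of the fundamental group from a homotopy class of loops. -/
def fromLoop {x : X} (p : Path.Homotopic.Quotient x x) : FundamentalGroup X x :=
  FundamentalGroup.fromPath p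

/-- The homotopy class of loops underlying an element of the fundamental group. -/
def toLoop {x : X} (γ : FundamentalGroup X x) : Path.Homotopic.Quotient x x :=
  FundamentalGroup.toPath γ

/-- A fundamental group element is *small* if it has a loop representative inside every
neighborhood of the basepoint. -/
def IsSmall {x : X} (γ : FundamentalGroup X x) : Prop :=
  ∀ U ∈ nhds x, ∃ δ : Path x x, (∀ t, δ t ∈ U) ∧ fromLoop ⟦δ⟧ = γ

/-- The set of small loop classes, i.e. the carrier of the small loop group `π₁ˢ(X,x)`. -/
def smallSet (X : Type*) [TopologicalSpace X] (x : X) : Set (FundamentalGroup X x) :=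
  {γ | IsSmall γ}

/-- Conjugate of a loop class at `y` by a path `α` from `x` to `y`: `α * β * α⁻¹`. -/
def conjPath {x y : X} (α : Path x y) (β : FundamentalGroup X y) : FundamentalGroup X x :=
  fromLoop (Path.Homotopic.Quotient.trans
    (Path.Homotopic.Quotient.trans (⟦α⟧ : Path.Homotopic.Quotient x y) (toLoop β))
    (⟦α.symm⟧ : Path.Homotopic.Quotient y x))

/-- The SG subgroup `π₁ˢᵍ(X,x)`: generated by conjugates of small loop classes. -/
def sgSubgroup (X : Type*) [TopologicalSpace X] (x : X) : Subgroup (FundamentalGroup X x) :=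
  Subgroup.closure {g | ∃ (y : X) (α : Path x y) (β : FundamentalGroup X y), IsSmall β ∧ g = conjPath α β}

/-- The map induced on fundamental groups by a continuous map. -/
def piMap (f : C(X, Y)) (x : X) (γ : FundamentalGroup X x) : FundamentalGroup Y (f x) :=
  fromLoop (Path.Homotopic.Quotient.map (toLoop γ) f)

/-- A small loop space: a path-connected, non-simply connected space all of whose loops
are small. -/
def IsSmallLoopSpace (X : Type*) [TopologicalSpace X] : Prop :=
  PathConnectedSpace X ∧ ¬ SimplyConnectedSpace X ∧
    ∀ (x : X) (γ : FundamentalGroup X x), IsSmall γ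

/-- A space is homotopically Hausdorff if every nontrivial loop class can be kept away from
some neighborhood of its basepoint. -/
def HomotopicallyHausdorff (X : Type*) [TopologicalSpace X] : Prop :=
  ∀ (x : X) (γ : FundamentalGroup X x), γ ≠ 1 →
    ∃ U ∈ nhds x, ∀ δ : Path x x, (∀ t, δ t ∈ U) → fromLoop ⟦δ⟧ ≠ γ

/-- The image of `π₁(U,y) → π₁(X,y)`: classes of loops having a representative inside `U`. -/
def loopsIn (U : Set X) (y : X) : Set (FundamentalGroup X y) :=
  {γ | ∃ δ : Path y y, (∀ t, δ t ∈ U) ∧ fromLoop ⟦δ⟧ = γ}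

/-- A semi-locally small loop space. -/
def SemiLocallySmallLoop (X : Type*) [TopologicalSpace X] : Prop :=
  ∀ x : X, ∃ U : Set X, IsOpen U ∧ x ∈ U ∧ ∀ y ∈ U, loopsIn U y = smallSet X y


/-- for every covering map `p : X̃ → X` with `p xt = x`, the small loop group
`π₁ˢ(X,x)` is contained in the image `p₋(π₁(X̃, xt))`. -/
theorem smallSet_subset_range_piMap {E X : Type*} [TopologicalSpace E] [TopologicalSpace X]
    (p : C(E, X)) (hp : IsCoveringMap p) (xt : E) :
    smallSet X (p xt) ⊆ Set.range (piMap p xt) := by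
  intro γ hγ
  haveI : Nonempty (p ⁻¹' {p xt}) := ⟨⟨xt, rfl⟩⟩
  obtain ⟨T, hT⟩ : ∃ T : Bundle.Trivialization (p ⁻¹' {p xt}) p, p xt ∈ T.baseSet :=
    ⟨(hp (p xt)).toTrivialization, (hp (p xt)).mem_toTrivialization_baseSet⟩
  obtain ⟨δ, hδ, hδγ⟩ := hγ T.baseSet (T.open_baseSet.mem_nhds hT)
  have hxs : xt ∈ T.source := T.mem_source.mpr hT
  have hcont : Continuous fun t : unitInterval => T.invFun (δ t, (T xt).2) := by
    apply T.continuousOn_invFun.comp_continuous (by continuity)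
    intro t
    rw [T.target_eq]
    exact ⟨hδ t, Set.mem_univ _⟩
  have hproj : ∀ t, p (T.invFun (δ t, (T xt).2)) = δ t := fun t =>
    T.proj_symm_apply' (hδ t)
  have h0 : T.invFun (δ 0, (T xt).2) = xt := by
    rw [δ.source]
    exact T.symm_apply_mk_proj hxs
  have h1 : T.invFun (δ 1, (T xt).2) = xt := by
    rw [δ.target]
    exact T.symm_apply_mk_proj hxs
  refine ⟨fromLoop ⟦⟨⟨fun t => T.invFun (δ t, (T xt).2), hcont⟩, h0, h1⟩⟧, ?_⟩
  have hmap : Path.map (⟨⟨fun t => T.invFun (δ t, (T xt).2), hcont⟩, h0, h1⟩ : Path xt xt)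
      p.continuous = δ := by
    ext t
    exact hproj t
  rw [← hδγ]
  show fromLoop (Path.Homotopic.Quotient.map
    (toLoop (fromLoop ⟦(⟨⟨fun t => T.invFun (δ t, (T xt).2), hcont⟩, h0, h1⟩ : Path xt xt)⟧)) p)
    = fromLoop ⟦δ⟧
  have htl : ∀ (q : Path.Homotopic.Quotient xt xt), toLoop (fromLoop q) = q := fun q => rfl
  exact congrArg (fun q : Path (p xt) (p xt) => fromLoop ⟦q⟧) hmap

end
end

section
/- For every covering map p : X̃ → X with p(x̃) = x, the SG subgroup π₁ˢᵍ(X, x) is contained in p₋(π₁(X̃, x̃)). -/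
open CategoryTheory Topology

attribute [local instance] Path.Homotopic.setoid

noncomputable section

variable {X Y E : Type*} [TopologicalSpace X] [TopologicalSpace Y] [TopologicalSpace E]

/-- Extension step: a partial lift up to `s` can be extended to `u` if `γ [s,u]`
lies in the base set of a trivialization. -/
private lemma lift_extend {E X : Type*} [TopologicalSpace E] [TopologicalSpace X]
    (p : C(E, X)) {F : Type*} [TopologicalSpace F] (T : Bundle.Trivialization F (⇑p))
    (γ : C(unitInterval, X)) (e₀ : E) {s u : ℝ}
    (hs : s ∈ Set.Icc (0:ℝ) 1) (hu : u ∈ Set.Icc (0:ℝ) 1) (hsu : s ≤ u)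
    (hU : ∀ t : unitInterval, s ≤ (t:ℝ) → (t:ℝ) ≤ u → γ t ∈ T.baseSet)
    (f : C(unitInterval, E)) (hf0 : f 0 = e₀)
    (hf : ∀ t : unitInterval, (t:ℝ) ≤ s → p (f t) = γ t) :
    ∃ g : C(unitInterval, E), g 0 = e₀ ∧ ∀ t : unitInterval, (t:ℝ) ≤ u → p (g t) = γ t := by
  set sI : unitInterval := ⟨s, hs⟩ with hsI
  set c : F := (T (f sI)).2 with hc
  have hproj : ∀ t : unitInterval, max s (min (t:ℝ) u) ∈ Set.Icc (0:ℝ) 1 := fun t =>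
    ⟨le_trans hs.1 (le_max_left _ _), max_le hs.2 (le_trans (min_le_right _ _) hu.2)⟩
  set proj : unitInterval → unitInterval := fun t => ⟨max s (min (t:ℝ) u), hproj t⟩ with hprojdef
  have hprojcont : Continuous proj :=
    Continuous.subtype_mk (continuous_const.max (continuous_subtype_val.min continuous_const)) _
  have hprojmem : ∀ t, γ (proj t) ∈ T.baseSet := fun t =>
    hU (proj t) (le_max_left _ _) (max_le hsu (min_le_right _ _))
  set σ : unitInterval → E := fun t => T.toOpenPartialHomeomorph.symm (γ (proj t), c) with hσdef
  have hσcont : Continuous σ := by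
    apply T.toOpenPartialHomeomorph.continuousOn_symm.comp_continuous
      ((γ.continuous.comp hprojcont).prodMk continuous_const)
    intro t
    rw [T.target_eq]
    exact ⟨hprojmem t, trivial⟩
  have hfs_src : f sI ∈ T.source := T.mem_source.2 (by rw [hf sI le_rfl]; exact hU sI le_rfl hsu)
  have hkey : f sI = σ sI := by
    have h1 : proj sI = sI := by
      apply Subtype.ext
      simp only [hprojdef]
      rw [min_eq_left hsu, max_self]
    rw [hσdef]
    simp only [h1]
    have h2 : (γ sI, c) = T (f sI) := by
      rw [← hf sI le_rfl, hc]
      exact T.mk_proj_snd hfs_src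
    rw [h2]
    exact (T.toOpenPartialHomeomorph.left_inv hfs_src).symm
  set g : unitInterval → E := fun t => if (t:ℝ) ≤ s then f t else σ t with hgdef
  have hgcont : Continuous g := by
    apply f.continuous.if_le hσcont continuous_subtype_val continuous_const
    intro t ht
    have : t = sI := Subtype.ext ht
    rw [this, hkey]
  refine ⟨⟨g, hgcont⟩, ?_, ?_⟩
  · show g 0 = e₀
    rw [hgdef]
    simp only []
    rw [if_pos (by exact_mod_cast hs.1 : ((0:unitInterval):ℝ) ≤ s), hf0]
  · intro t htu
    show p (g t) = γ t
    rw [hgdef]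
    by_cases h : (t:ℝ) ≤ s
    · simpa [h] using hf t h
    · simp only [if_neg h]
      push_neg at h
      have hproj_t : proj t = t := by
        apply Subtype.ext
        simp only [hprojdef]
        rw [min_eq_left htu, max_eq_right h.le]
      rw [hσdef]
      simp only [hproj_t]
      exact T.proj_symm_apply' (hproj_t ▸ hprojmem t)

private lemma exists_path_lift {E X : Type*} [TopologicalSpace E] [TopologicalSpace X]
    (p : C(E, X)) (hp : IsCoveringMap p) (γ : C(unitInterval, X)) (e₀ : E)
    (he : p e₀ = γ 0) :
    ∃ f : C(unitInterval, E), f 0 = e₀ ∧ ∀ t, p (f t) = γ t := by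
  set A : Set ℝ := {s | s ∈ Set.Icc (0:ℝ) 1 ∧
    ∃ f : C(unitInterval, E), f 0 = e₀ ∧ ∀ t : unitInterval, (t:ℝ) ≤ s → p (f t) = γ t} with hA
  have h0A : (0:ℝ) ∈ A := by
    refine ⟨⟨le_rfl, zero_le_one⟩, ContinuousMap.const _ e₀, rfl, fun t ht => ?_⟩
    have : t = 0 := Subtype.ext (le_antisymm ht t.2.1)
    rw [this]; simpa using he
  have hne : A.Nonempty := ⟨0, h0A⟩
  have hbdd : BddAbove A := ⟨1, fun s hs => hs.1.2⟩
  set b : ℝ := sSup A with hb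
  have hb0 : 0 ≤ b := le_csSup hbdd h0A
  have hb1 : b ≤ 1 := csSup_le hne fun s hs => hs.1.2
  set bI : unitInterval := ⟨b, hb0, hb1⟩ with hbI
  have hec := hp (γ bI)
  haveI : Nonempty (p ⁻¹' {γ bI}) := ⟨⟨hp.liftPath γ e₀ he.symm bI, congrFun (hp.liftPath_lifts γ e₀ he.symm) bI⟩⟩
  set T := hec.toTrivialization with hT
  have hbase : γ bI ∈ T.baseSet := hec.mem_toTrivialization_baseSet
  have hnhds : γ ⁻¹' T.baseSet ∈ nhds bI :=
    γ.continuous.continuousAt.preimage_mem_nhds (T.open_baseSet.mem_nhds hbase)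
  obtain ⟨ε, εpos, hball⟩ := Metric.mem_nhds_iff.1 hnhds
  have hclose : ∀ t : unitInterval, |(t:ℝ) - b| < ε → γ t ∈ T.baseSet := by
    intro t ht
    apply hball
    rw [Metric.mem_ball, Subtype.dist_eq, Real.dist_eq]
    exact ht
  obtain ⟨s, hsA, hslt⟩ := exists_lt_of_lt_csSup hne (by linarith : b - ε/2 < b)
  have hsb : s ≤ b := le_csSup hbdd hsA
  set u : ℝ := min 1 (b + ε/2) with hu
  have hu0 : 0 ≤ u := le_min zero_le_one (by linarith)
  have hu1 : u ≤ 1 := min_le_left _ _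
  have hbu : b ≤ u := le_min hb1 (by linarith)
  have hUicc : ∀ t : unitInterval, s ≤ (t:ℝ) → (t:ℝ) ≤ u → γ t ∈ T.baseSet := by
    intro t h1 h2
    apply hclose
    rw [abs_sub_lt_iff]
    constructor
    · have := le_trans h2 (min_le_right 1 (b + ε/2))
      linarith
    · linarith
  obtain ⟨hsIcc, f, hf0, hf⟩ := hsA
  obtain ⟨g, hg0, hg⟩ := lift_extend p T γ e₀ hsIcc ⟨hu0, hu1⟩ (le_trans hsb hbu) hUicc f hf0 hf
  have huA : u ∈ A := ⟨⟨hu0, hu1⟩, g, hg0, hg⟩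
  have hub : u ≤ b := le_csSup hbdd huA
  have hbeq : b = 1 := by
    by_contra h
    have hblt : b < 1 := lt_of_le_of_ne hb1 h
    have : b < u := lt_min hblt (by linarith)
    linarith
  refine ⟨g, hg0, fun t => hg t ?_⟩
  have : (1:ℝ) ≤ u := le_antisymm hub (hbeq ▸ hbu) ▸ (hbeq ▸ le_rfl)
  exact le_trans t.2.2 this

/-- Path lifting for covering maps. -/
private lemma exists_path_lift' {E X : Type*} [TopologicalSpace E] [TopologicalSpace X]
    (p : C(E, X)) (hp : IsCoveringMap p) {a b : X} (α : Path a b) (e₀ : E)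
    (he : p e₀ = a) :
    ∃ (e₁ : E) (α' : Path e₀ e₁), p e₁ = b ∧ ∀ t, p (α' t) = α t := by
  obtain ⟨f, hf0, hf⟩ := exists_path_lift p hp α.toContinuousMap e₀
    (by simpa using he)
  refine ⟨f 1, ⟨⟨f, f.continuous⟩, hf0, rfl⟩, by simpa using hf 1, fun t => by simpa using hf t⟩

/-- Lifting a loop contained in the base set of a trivialization, to a loop. -/
private lemma exists_loop_lift {E X : Type*} [TopologicalSpace E] [TopologicalSpace X]
    (p : C(E, X)) {F : Type*} [TopologicalSpace F] (T : Bundle.Trivialization F (⇑p))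
    (e₁ : E) (hbase : p e₁ ∈ T.baseSet) (δ : Path (p e₁) (p e₁))
    (hδ : ∀ t, δ t ∈ T.baseSet) :
    ∃ δ' : Path e₁ e₁, ∀ t, p (δ' t) = δ t := by
  set c : F := (T e₁).2 with hc
  set σ : unitInterval → E := fun t => T.toOpenPartialHomeomorph.symm (δ t, c) with hσdef
  have hσcont : Continuous σ := by
    apply T.toOpenPartialHomeomorph.continuousOn_symm.comp_continuous
      (δ.continuous.prodMk continuous_const)
    intro t
    rw [T.target_eq]
    exact ⟨hδ t, trivial⟩
  have hsrc : e₁ ∈ T.source := T.mem_source.2 hbase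
  have hends : ∀ t, δ t = p e₁ → σ t = e₁ := by
    intro t ht
    rw [hσdef]
    simp only [ht]
    rw [hc, T.mk_proj_snd hsrc]
    exact T.toOpenPartialHomeomorph.left_inv hsrc
  refine ⟨⟨⟨σ, hσcont⟩, hends 0 δ.source, hends 1 δ.target⟩, fun t => ?_⟩
  exact T.proj_symm_apply' (hδ t)

private lemma toLoop_fromLoop {x : X} (q : Path.Homotopic.Quotient x x) : toLoop (fromLoop q) = q := rfl

private lemma fromLoop_toLoop {x : X} (γ : FundamentalGroup X x) : fromLoop (toLoop γ) = γ :=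
  rfl

private lemma toLoop_injective {x : X} : Function.Injective (toLoop (x := x)) := by
  intro a b h
  rw [← fromLoop_toLoop a, ← fromLoop_toLoop b, h]

private lemma toLoop_mul {x : X} (a b : FundamentalGroup X x) :
    toLoop (a * b) = Path.Homotopic.Quotient.trans (toLoop b) (toLoop a) := rfl

private lemma mapFn_comp (f : C(X, Y)) {x y z : X} (q : Path.Homotopic.Quotient x y)
    (r : Path.Homotopic.Quotient y z) :
    (q.trans r).map f = (q.map f).trans (r.map f) := by
  induction q using Quotient.inductionOn with
  | h a =>
    induction r using Quotient.inductionOn with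
    | h b =>
      show Path.Homotopic.Quotient.mk ((a.trans b).map f.continuous) =
        Path.Homotopic.Quotient.mk ((a.map f.continuous).trans (b.map f.continuous))
      rw [Path.map_trans]

private lemma piMap_mul (f : C(X, Y)) (x : X) (a b : FundamentalGroup X x) :
    piMap f x (a * b) = piMap f x a * piMap f x b := by
  apply toLoop_injective
  rw [toLoop_mul]
  show Path.Homotopic.Quotient.map (toLoop (a * b)) f = _
  rw [toLoop_mul, mapFn_comp]
  rfl


/-- for every covering map `p : X̃ → X` with `p xt = x`, the SG subgroup
`π₁ˢᵍ(X,x)` is contained in the image `p₋(π₁(X̃, xt))`. -/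
theorem sgSubgroup_subset_range_piMap {E X : Type*} [TopologicalSpace E] [TopologicalSpace X]
    (p : C(E, X)) (hp : IsCoveringMap p) (xt : E) :
    (sgSubgroup X (p xt) : Set (FundamentalGroup X (p xt))) ⊆ Set.range (piMap p xt) := by
  set φ : FundamentalGroup E xt →* FundamentalGroup X (p xt) :=
    MonoidHom.mk' (piMap p xt) (piMap_mul p xt) with hφ
  have hle : sgSubgroup X (p xt) ≤ φ.range := by
    apply (Subgroup.closure_le _).2
    rintro g ⟨y, α, β, hβ, rfl⟩
    obtain ⟨e₁, α', hpe₁, hα'⟩ := exists_path_lift' p hp α xt rfl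
    subst hpe₁
    have hec := hp (p e₁)
    haveI : Nonempty (p ⁻¹' {p e₁}) := ⟨⟨e₁, rfl⟩⟩
    set T := hec.toTrivialization with hT
    have hbase : p e₁ ∈ T.baseSet := hec.mem_toTrivialization_baseSet
    obtain ⟨δ, hδU, hδβ⟩ := hβ T.baseSet (T.open_baseSet.mem_nhds hbase)
    obtain ⟨δ', hδ'⟩ := exists_loop_lift p T e₁ hbase δ hδU
    rw [SetLike.mem_coe, MonoidHom.mem_range]
    refine ⟨fromLoop ⟦(α'.trans δ').trans α'.symm⟧, ?_⟩
    have hαeq : α'.map p.continuous = α := by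
      ext t
      simpa using hα' t
    have hδeq : δ'.map p.continuous = δ := by
      ext t
      simpa using hδ' t
    have hβloop : toLoop β = ⟦δ⟧ := by rw [← hδβ]; rfl
    show piMap p xt (fromLoop ⟦(α'.trans δ').trans α'.symm⟧) = conjPath α β
    rw [piMap, conjPath, hβloop]
    show fromLoop (Path.Homotopic.Quotient.mk (((α'.trans δ').trans α'.symm).map p.continuous)) =
      fromLoop (Path.Homotopic.Quotient.mk ((α.trans δ).trans α.symm))
    rw [Path.map_trans, Path.map_trans, ← Path.map_symm, hαeq, hδeq]
  intro g hg
  obtain ⟨e, he⟩ := hle hg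
  exact ⟨e, he⟩


end
end

section
/- Every covering space of a small loop space X is a one-sheeted covering, i.e., the covering map is a homeomorphism onto X. -/
open CategoryTheory Topology

attribute [local instance] Path.Homotopic.setoid

noncomputable section

variable {X Y E : Type*} [TopologicalSpace X] [TopologicalSpace Y] [TopologicalSpace E]

section CoveringLifting

open unitInterval

noncomputable section LiftAux

variable {E₀ X₀ : Type*} [TopologicalSpace E₀] [TopologicalSpace X₀] {p : E₀ → X₀}

/-- Subdivision points of the unit interval. -/
noncomputable def subdiv (n k : ℕ) : I := Set.projIcc 0 1 zero_le_one ((k : ℝ) / n)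

lemma subdiv_zero (n : ℕ) : subdiv n 0 = 0 := by
  simp [subdiv, Set.projIcc_left]

lemma subdiv_last {n : ℕ} (hn : 0 < n) : subdiv n n = 1 := by
  have : ((n : ℝ)) / n = 1 := div_self (by positivity)
  simp only [subdiv, this]
  exact Set.projIcc_right _

lemma subdiv_mono (n : ℕ) {k k' : ℕ} (h : k ≤ k') : subdiv n k ≤ subdiv n k' := by
  apply Set.monotone_projIcc
  gcongr

lemma subdiv_dist {n k : ℕ} (hn : 0 < n) :
    (subdiv n (k+1) : ℝ) - subdiv n k ≤ 1 / n := by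
  have h := (LipschitzWith.projIcc (zero_le_one (α := ℝ))).dist_le_mul
    (((k:ℝ)+1) / n) ((k : ℝ) / n)
  simp only [NNReal.coe_one, one_mul] at h
  have h2 : dist ((((k:ℝ)+1)) / n) ((k : ℝ) / n) = 1 / n := by
    rw [Real.dist_eq, div_sub_div_same, add_sub_cancel_left]
    rw [abs_of_nonneg (by positivity)]
  have h3 : dist (subdiv n (k+1)) (subdiv n k) ≤ 1 / n := by
    simpa [subdiv, Nat.cast_add, Nat.cast_one, h2] using h
  have h4 : (subdiv n (k+1) : ℝ) - subdiv n k ≤ dist (subdiv n (k+1)) (subdiv n k) := by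
    rw [Subtype.dist_eq, Real.dist_eq]
    exact le_abs_self _
  linarith

/-- One-step extension of a partial lift across a segment contained in the base set of
a trivialization. -/
lemma extend_lift {F : Type*} [TopologicalSpace F] (T : Bundle.Trivialization F p)
    (γ : C(I, X₀)) (a b : I) (hab : a ≤ b)
    (hseg : ∀ t : I, a ≤ t → t ≤ b → γ t ∈ T.baseSet)
    (L : C(I, E₀)) (hL : ∀ t, p (L t) = γ (min t a)) :
    ∃ L' : C(I, E₀), (∀ t, p (L' t) = γ (min t b)) ∧ (∀ t, t ≤ a → L' t = L t) ∧
      (∀ t, b ≤ t → L' t = T.toOpenPartialHomeomorph.symm (γ b, (T (L a)).2)) := by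
  have hmemA : γ a ∈ T.baseSet := hseg a le_rfl hab
  have hLa : p (L a) = γ a := by simpa using hL a
  have hsrc : L a ∈ T.source := T.mem_source.2 (by rw [hLa]; exact hmemA)
  set i := (T (L a)).2 with hi
  have hclamp_cont : Continuous fun t : I => max a (min t b) :=
    continuous_const.max (continuous_id.min continuous_const)
  have hclamp_mem : ∀ t : I, γ (max a (min t b)) ∈ T.baseSet := fun t =>
    hseg _ (le_max_left _ _) (max_le hab (min_le_right _ _))
  set B : I → E₀ := fun t => T.toOpenPartialHomeomorph.symm (γ (max a (min t b)), i) with hB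
  have hBtarget : ∀ t : I, ((γ (max a (min t b)), i) : X₀ × F) ∈ T.target := fun t => by
    rw [T.target_eq]; exact ⟨hclamp_mem t, Set.mem_univ _⟩
  have hBcont : Continuous B := by
    apply T.continuousOn_invFun.comp_continuous
      ((γ.continuous.comp hclamp_cont).prodMk continuous_const) hBtarget
  have hTLa : (T (L a) : X₀ × F) = (γ a, i) := by
    refine Prod.ext ?_ rfl
    rw [T.coe_fst' (by rw [hLa]; exact hmemA), hLa]
  have hBa : B a = L a := by
    have h1 : max a (min a b) = a := by rw [min_eq_left hab, max_self]
    rw [hB]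
    simp only [h1]
    rw [← hTLa]
    exact T.toOpenPartialHomeomorph.left_inv hsrc
  refine ⟨⟨fun t => if t ≤ a then L t else B t, ?_⟩, ?_, ?_, ?_⟩
  · exact Continuous.if_le L.continuous hBcont continuous_id continuous_const
      (fun t ht => by rw [ht, hBa])
  · intro t
    by_cases h : t ≤ a
    · simp only [ContinuousMap.coe_mk, if_pos h]
      rw [hL t, min_eq_left h, min_eq_left (h.trans hab)]
    · have h' : a ≤ t := le_of_not_ge h
      simp only [ContinuousMap.coe_mk, if_neg h]
      have hcl : max a (min t b) = min t b := max_eq_right (le_min h' hab)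
      rw [hB]
      simp only [hcl]
      exact T.proj_symm_apply (by rw [T.target_eq]; exact ⟨by rw [← hcl]; exact hclamp_mem t, Set.mem_univ _⟩)
  · intro t ht
    simp only [ContinuousMap.coe_mk, if_pos ht]
  · intro t ht
    by_cases h : t ≤ a
    · have hta : t = a := le_antisymm h (hab.trans ht)
      have hba : b = a := le_antisymm (ht.trans h) hab
      simp only [ContinuousMap.coe_mk, if_pos h]
      rw [hta, hba, ← hTLa]
      exact (T.toOpenPartialHomeomorph.left_inv hsrc).symm
    · have h' : a ≤ t := le_of_not_ge h
      simp only [ContinuousMap.coe_mk, if_neg h]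
      have hcl : max a (min t b) = b := by rw [min_eq_right ht, max_eq_right hab]
      rw [hB]
      simp only [hcl]

end LiftAux

section Main

variable {E₀ X₀ : Type*} [TopologicalSpace E₀] [TopologicalSpace X₀] {p : E₀ → X₀}

lemma range_isClosed (hp : IsCoveringMap p) : IsClosed (Set.range p) := by
  rw [← isOpen_compl_iff, isOpen_iff_forall_mem_open]
  intro x hx
  obtain ⟨_, U, hxU, hU, _, Hm, _⟩ := hp x
  refine ⟨U, ?_, hU, hxU⟩
  rintro y hyU ⟨e, rfl⟩
  exact hx ⟨((Hm ⟨e, hyU⟩).2 : E₀), ((Hm ⟨e, hyU⟩).2).2⟩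

lemma fiber_nonempty (hp : IsCoveringMap p) (γ : C(I, X₀)) (e : E₀) (he : p e = γ 0) (t : I) :
    Nonempty (p ⁻¹' {γ t}) := by
  have huniv : γ ⁻¹' Set.range p = Set.univ := IsClopen.eq_univ
    ⟨(range_isClosed hp).preimage γ.continuous, hp.isOpenMap.isOpen_range.preimage γ.continuous⟩
    ⟨0, ⟨e, he⟩⟩
  have ht : t ∈ γ ⁻¹' Set.range p := huniv ▸ Set.mem_univ t
  obtain ⟨e', he'⟩ := ht
  exact ⟨⟨e', he'⟩⟩

/-- Near any parameter `u0`, all the paths `H (u, ·)` admit lifts starting at `e`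
with a common endpoint. -/
lemma exists_nhds_lift (hp : IsCoveringMap p) (H : C(I × I, X₀)) {x : X₀}
    (hx0 : ∀ u, H (u, 0) = x) (hx1 : ∀ u, H (u, 1) = x) {e : E₀} (he : p e = x) (u0 : I) :
    ∃ c : E₀, ∀ᶠ u in nhds u0, ∃ L : C(I, E₀),
      (∀ t, p (L t) = H (u, t)) ∧ L 0 = e ∧ L 1 = c := by
  classical
  haveI hne : ∀ s : I, Nonempty (p ⁻¹' {H (u0, s)}) := fun s =>
    fiber_nonempty hp ⟨fun t => H (u0, t), H.continuous.comp (Continuous.prodMk_right u0)⟩ e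
      (he.trans (hx0 u0).symm) s
  -- Lebesgue number for the cover of the `t`-interval pulled back from evenly covered sets
  set cov : I → Set I := fun s => {t : I | H (u0, t) ∈ (hp (H (u0, s))).toTrivialization.baseSet}
    with hcov
  have hcovopen : ∀ s, IsOpen (cov s) := fun s =>
    ((hp (H (u0, s))).toTrivialization.open_baseSet).preimage
      (H.continuous.comp (Continuous.prodMk_right u0))
  have hcovmem : ∀ t : I, t ∈ cov t := fun t =>
    (hp (H (u0, t))).mem_toTrivialization_baseSet
  obtain ⟨δ, hδ0, hball⟩ := lebesgue_number_lemma_of_metric isCompact_univ hcovopen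
    (fun t _ => Set.mem_iUnion.2 ⟨t, hcovmem t⟩)
  obtain ⟨m, hm⟩ := exists_nat_one_div_lt hδ0
  set n := m + 1 with hn
  have hnpos : 0 < n := Nat.succ_pos m
  have hstep : (1 : ℝ) / n < δ := by rw [hn]; exact_mod_cast hm
  -- choose trivializations along the subdivision
  have hsel : ∀ k : ℕ, ∃ s : I, Metric.ball (subdiv n k) δ ⊆ cov s := fun k => by
    obtain ⟨s, hs⟩ := hball (subdiv n k) (Set.mem_univ _)
    exact ⟨s, hs⟩
  choose sel hsel' using hsel
  -- `T k` is the trivialization used over the segment `[subdiv n k, subdiv n (k+1)]`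
  let T : (k : ℕ) → Bundle.Trivialization (↑(p ⁻¹' {H (u0, sel k)})) p :=
    fun k => (hp (H (u0, sel k))).toTrivialization
  have hseg0 : ∀ k : ℕ, ∀ t : I, subdiv n k ≤ t → t ≤ subdiv n (k+1) →
      H (u0, t) ∈ (T k).baseSet := by
    intro k t h1 h2
    apply hsel' k
    rw [Metric.mem_ball, Subtype.dist_eq, Real.dist_eq, abs_of_nonneg (by
      simp only [sub_nonneg]; exact_mod_cast h1)]
    have := subdiv_dist (n := n) (k := k) hnpos
    have h2' : (t : ℝ) ≤ subdiv n (k+1) := h2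
    linarith
  -- the open neighborhoods of `u0` over which the segments stay evenly covered
  set A : ℕ → Set I := fun k => {u : I | ∀ t : I, subdiv n k ≤ t → t ≤ subdiv n (k+1) →
    H (u, t) ∈ (T k).baseSet} with hA
  have hAopen : ∀ k, IsOpen (A k) := by
    intro k
    have hcl : IsClosed {q : I × I | (subdiv n k ≤ q.1 ∧ q.1 ≤ subdiv n (k+1)) ∧
        H (q.2, q.1) ∈ ((T k).baseSet)ᶜ} := by
      refine IsClosed.inter ((isClosed_le continuous_const
          (continuous_subtype_val.comp continuous_fst)).inter
        (isClosed_le (continuous_subtype_val.comp continuous_fst) continuous_const)) ?_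
      exact (isClosed_compl_iff.2 (T k).open_baseSet).preimage
        (H.continuous.comp (continuous_snd.prodMk continuous_fst))
    have himg := isClosedMap_snd_of_compactSpace _ hcl
    have heq : A k = (Prod.snd '' {q : I × I | (subdiv n k ≤ q.1 ∧ q.1 ≤ subdiv n (k+1)) ∧
        H (q.2, q.1) ∈ ((T k).baseSet)ᶜ})ᶜ := by
      ext u
      constructor
      · intro hu hmem
        obtain ⟨q, ⟨⟨h1, h2⟩, h3⟩, rfl⟩ := hmem
        exact h3 (hu q.1 h1 h2)
      · intro hu t h1 h2
        by_contra h3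
        exact hu ⟨(t, u), ⟨⟨h1, h2⟩, h3⟩, rfl⟩
    rw [heq]
    exact himg.isOpen_compl
  have hu0A : ∀ k, u0 ∈ A k := fun k t h1 h2 => hseg0 k t h1 h2
  set W : Set I := ⋂ k ∈ Finset.range n, A k with hW
  have hWopen : IsOpen W := isOpen_biInter_finset (fun k _ => hAopen k)
  have hu0W : u0 ∈ W := Set.mem_biInter (fun k _ => hu0A k)
  have hWA : ∀ {u}, u ∈ W → ∀ {k}, k < n → u ∈ A k := fun {u} hu {k} hk =>
    Set.mem_iInter₂.mp hu _ (Finset.mem_range.2 hk)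
  -- main induction: partial lifts up to `subdiv n k`, with endpoints depending
  -- continuously on the parameter `u ∈ W`
  have claim : ∀ k : ℕ, k ≤ n → ∃ g : I → E₀, ContinuousOn g W ∧
      (∀ u ∈ W, p (g u) = H (u, subdiv n k)) ∧
      ∀ u ∈ W, ∃ L : C(I, E₀), (∀ t, p (L t) = H (u, min t (subdiv n k))) ∧ L 0 = e ∧
        ∀ t, subdiv n k ≤ t → L t = g u := by
    intro k
    induction k with
    | zero =>
      intro _
      refine ⟨fun _ => e, continuousOn_const, ?_, ?_⟩
      · intro u _; rw [subdiv_zero, hx0 u, he]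
      · intro u _
        refine ⟨ContinuousMap.const I e, ?_, rfl, fun t _ => rfl⟩
        intro t
        rw [subdiv_zero, min_eq_right unitInterval.nonneg', hx0 u]
        exact he
    | succ k ih =>
      intro hk1
      obtain ⟨g, hgcont, hgp, hglift⟩ := ih (Nat.le_of_succ_le hk1)
      have hkn : k < n := hk1
      have hab : subdiv n k ≤ subdiv n (k+1) := subdiv_mono n (Nat.le_succ k)
      have hmem1 : ∀ u ∈ W, H (u, subdiv n k) ∈ (T k).baseSet := fun u hu =>
        hWA hu hkn _ le_rfl hab
      have hmem2 : ∀ u ∈ W, H (u, subdiv n (k+1)) ∈ (T k).baseSet := fun u hu =>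
        hWA hu hkn _ hab le_rfl
      have hgsrc : ∀ u ∈ W, g u ∈ (T k).source := fun u hu =>
        (T k).mem_source.2 (by rw [hgp u hu]; exact hmem1 u hu)
      have htarget : ∀ u ∈ W,
          ((H (u, subdiv n (k+1)), ((T k) (g u)).2) : X₀ × _) ∈ (T k).target :=
        fun u hu => by rw [(T k).target_eq]; exact ⟨hmem2 u hu, Set.mem_univ _⟩
      refine ⟨fun u => (T k).toOpenPartialHomeomorph.symm
        (H (u, subdiv n (k+1)), ((T k) (g u)).2), ?_, ?_, ?_⟩
      · have hc1 : ContinuousOn (fun u => (T k) (g u)) W :=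
          (T k).continuousOn_toFun.comp hgcont hgsrc
        have hc2 : ContinuousOn
            (fun u : I => ((H (u, subdiv n (k+1)), ((T k) (g u)).2) : X₀ × _)) W :=
          ((H.continuous.comp (continuous_id.prodMk continuous_const)).continuousOn).prodMk
            hc1.snd
        exact (T k).continuousOn_invFun.comp hc2 htarget
      · intro u hu
        exact (T k).proj_symm_apply (htarget u hu)
      · intro u hu
        obtain ⟨L, hLp, hL0, hLend⟩ := hglift u hu
        obtain ⟨L', hL'p, hL'le, hL'ge⟩ := extend_lift (T k)
          ⟨fun t => H (u, t), H.continuous.comp (Continuous.prodMk_right u)⟩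
          (subdiv n k) (subdiv n (k+1)) hab
          (fun t h1 h2 => hWA hu hkn t h1 h2) L hLp
        refine ⟨L', hL'p, by rw [hL'le 0 unitInterval.nonneg', hL0], ?_⟩
        intro t ht
        rw [hL'ge t ht, hLend (subdiv n k) le_rfl]
        rfl
  -- conclude using discreteness of the fiber over `x`
  obtain ⟨g, hgcont, hgp, hglift⟩ := claim n le_rfl
  haveI : DiscreteTopology ↥(p ⁻¹' {x}) := (hp x).1
  have hfib : ∀ u ∈ W, g u ∈ p ⁻¹' {x} := fun u hu => by
    have h := hgp u hu
    rw [subdiv_last hnpos, hx1 u] at h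
    exact h
  have hWnhds : W ∈ nhds u0 := hWopen.mem_nhds hu0W
  have hsingle : IsOpen ({⟨g u0, hfib u0 hu0W⟩} : Set ↥(p ⁻¹' {x})) := isOpen_discrete _
  obtain ⟨V, hVopen, hVeq⟩ := isOpen_induced_iff.1 hsingle
  have hgV : g u0 ∈ V := by
    have h : (⟨g u0, hfib u0 hu0W⟩ : ↥(p ⁻¹' {x})) ∈ Subtype.val ⁻¹' V := by rw [hVeq]; rfl
    exact h
  have hcontat : ContinuousAt g u0 := hgcont.continuousAt hWnhds
  have hev : ∀ᶠ u in nhds u0, g u ∈ V := hcontat.preimage_mem_nhds (hVopen.mem_nhds hgV)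
  refine ⟨g u0, ?_⟩
  filter_upwards [hev, hWnhds] with u huV huW
  have hgu : g u = g u0 := by
    have h1 : (⟨g u, hfib u huW⟩ : ↥(p ⁻¹' {x})) ∈ Subtype.val ⁻¹' V := huV
    rw [hVeq, Set.mem_singleton_iff] at h1
    exact congrArg Subtype.val h1
  obtain ⟨L, hLp, hL0, hLend⟩ := hglift u huW
  refine ⟨L, ?_, hL0, ?_⟩
  · intro t
    rw [hLp t, subdiv_last hnpos, min_eq_left unitInterval.le_one']
  · rw [hLend 1 (le_of_eq (subdiv_last hnpos)), hgu]



/-- Lifts (starting at the same point) of homotopic-rel-endpoints loops have the same endpoint. -/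
lemma lift_one_eq (hp : IsCoveringMap p) (H : C(I × I, X₀)) {x : X₀}
    (hx0 : ∀ u, H (u, 0) = x) (hx1 : ∀ u, H (u, 1) = x) {e : E₀} (he : p e = x)
    (L0 L1 : C(I, E₀)) (h0 : ∀ t, p (L0 t) = H (0, t)) (h1 : ∀ t, p (L1 t) = H (1, t))
    (hL00 : L0 0 = e) (hL10 : L1 0 = e) : L0 1 = L1 1 := by
  have uniq : ∀ (u : I) (L L' : C(I, E₀)), (∀ t, p (L t) = H (u, t)) →
      (∀ t, p (L' t) = H (u, t)) → L 0 = L' 0 → ∀ t, L t = L' t := by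
    intro u L L' hL hL' h00 t
    exact congrFun (hp.eq_of_comp_eq L.continuous L'.continuous
      (funext fun s => by simp only [Function.comp_apply, hL s, hL' s]) 0 h00) t
  set S : E₀ → Set I := fun c => {u | ∃ L : C(I, E₀), (∀ t, p (L t) = H (u, t)) ∧ L 0 = e ∧
    L 1 = c} with hS
  have key : ∀ u : I, ∃ c : E₀, u ∈ S c ∧ S c ∈ nhds u := by
    intro u
    obtain ⟨c, hev⟩ := exists_nhds_lift hp H hx0 hx1 he u
    exact ⟨c, hev.self_of_nhds, hev⟩
  have hdisj : ∀ (u : I) (c c' : E₀), u ∈ S c → u ∈ S c' → c = c' := by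
    rintro u c c' ⟨L, hL, hL0, hL1⟩ ⟨L', hL', hL'0, hL'1⟩
    rw [← hL1, ← hL'1]
    exact uniq u L L' hL hL' (by rw [hL0, hL'0]) 1
  have hZopen : IsOpen (S (L0 1)) := by
    rw [isOpen_iff_mem_nhds]
    intro u hu
    obtain ⟨c, huc, hnc⟩ := key u
    rwa [hdisj u c (L0 1) huc hu] at hnc
  have hZclosed : IsClosed (S (L0 1)) := by
    rw [← isOpen_compl_iff, isOpen_iff_mem_nhds]
    intro u hu
    obtain ⟨c, huc, hnc⟩ := key u
    refine Filter.mem_of_superset hnc ?_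
    intro u' hu' hu'Z
    exact hu (by rwa [hdisj u' c (L0 1) hu' hu'Z] at huc)
  have h0mem : (0 : I) ∈ S (L0 1) := ⟨L0, h0, hL00, rfl⟩
  have huniv : S (L0 1) = Set.univ := IsClopen.eq_univ ⟨hZclosed, hZopen⟩ ⟨0, h0mem⟩
  have h1mem : (1 : I) ∈ S (L0 1) := huniv ▸ Set.mem_univ _
  obtain ⟨L, hL, hL0', hL1'⟩ := h1mem
  rw [← hL1']
  exact (uniq 1 L1 L h1 hL (by rw [hL10, hL0']) 1).symm

end Main

end CoveringLifting

/-- every covering of a small loop space is one-sheeted, i.e. the covering map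
is a homeomorphism onto `X`. -/
theorem covering_of_smallLoopSpace_isHomeomorph {E X : Type*} [TopologicalSpace E]
    [TopologicalSpace X] [PathConnectedSpace E] (hX : IsSmallLoopSpace X)
    (p : C(E, X)) (hp : IsCoveringMap p) :
    IsHomeomorph p := by
  haveI := hX.1
  haveI : ConnectedSpace X := PathConnectedSpace.connectedSpace
  haveI : Nonempty E := PathConnectedSpace.nonempty
  refine ⟨p.continuous, hp.isOpenMap, ?_, ?_⟩
  · -- injectivity
    intro e1 e2 h
    set x := p e1 with hx
    haveI : Nonempty (p ⁻¹' {x}) := ⟨⟨e1, hx.symm⟩⟩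
    set T := (hp x).toTrivialization with hT
    have hxU : x ∈ T.baseSet := (hp x).mem_toTrivialization_baseSet
    have hU : T.baseSet ∈ nhds x := T.open_baseSet.mem_nhds hxU
    obtain ⟨α⟩ := PathConnectedSpace.joined e1 e2
    set γ' : Path x x := (α.map p.continuous).cast rfl h with hγ'
    obtain ⟨δ, hδU, hδγ⟩ := hX.2.2 x (fromLoop ⟦γ'⟧) T.baseSet hU
    have hq : (⟦δ⟧ : Path.Homotopic.Quotient x x) = ⟦γ'⟧ :=
      hδγ
    have hhom : Path.Homotopic δ γ' := Quotient.exact hq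
    obtain ⟨Hom⟩ := hhom
    set H : C(unitInterval × unitInterval, X) := Hom.toContinuousMap with hH
    have hx0 : ∀ u : unitInterval, H (u, 0) = x := fun u =>
      (Hom.eq_fst u (Set.mem_insert _ _)).trans δ.source
    have hx1 : ∀ u : unitInterval, H (u, 1) = x := fun u =>
      (Hom.eq_fst u (Set.mem_insert_of_mem _ rfl)).trans δ.target
    have hpe1 : p e1 = x := hx.symm
    have hTsym : ∀ t : unitInterval, ((δ t, (T e1).2) : X × _) ∈ T.target := fun t => by
      rw [T.target_eq]; exact ⟨hδU t, Set.mem_univ _⟩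
    have he1src : e1 ∈ T.source := T.mem_source.2 (by rw [hpe1]; exact hxU)
    have hTe1 : (T e1 : X × _) = (x, (T e1).2) :=
      Prod.ext (by rw [T.coe_fst' (by rw [hpe1]; exact hxU), hpe1]) rfl
    set K : C(unitInterval, E) := ⟨fun t => T.toOpenPartialHomeomorph.symm (δ t, (T e1).2),
      T.continuousOn_invFun.comp_continuous (δ.continuous.prodMk continuous_const) hTsym⟩
      with hK
    have hKp : ∀ t, p (K t) = δ t := fun t => T.proj_symm_apply (hTsym t)
    have hKconst : ∀ t : unitInterval, δ t = x → K t = e1 := by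
      intro t ht
      show T.toOpenPartialHomeomorph.symm (δ t, (T e1).2) = e1
      rw [ht, show ((x, (T e1).2) : X × _) = T e1 from hTe1.symm]
      exact T.toOpenPartialHomeomorph.left_inv he1src
    have h0lift : ∀ t, p (K t) = H (0, t) := fun t =>
      (hKp t).trans (Hom.apply_zero t).symm
    have h1lift : ∀ t, p (α.toContinuousMap t) = H (1, t) := by
      intro t
      have h1 : H (1, t) = γ'.toContinuousMap t := Hom.apply_one t
      have h2 : γ'.toContinuousMap t = p (α t) := by
        show γ' t = p (α t)
        rw [hγ', Path.cast_coe, Path.map_coe]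
        rfl
      rw [h1, h2]
      rfl
    have hend := lift_one_eq hp H hx0 hx1 hpe1 K α.toContinuousMap h0lift h1lift
      (hKconst 0 δ.source) α.source
    have hK1 : K 1 = e1 := hKconst 1 δ.target
    rw [hK1] at hend
    rw [hend]
    exact α.target
  · -- surjectivity
    have hopen : IsOpen (Set.range p) := hp.isOpenMap.isOpen_range
    have hclosed : IsClosed (Set.range p) := range_isClosed hp
    have huniv : Set.range p = Set.univ := IsClopen.eq_univ ⟨hclosed, hopen⟩
      ⟨p (Classical.arbitrary E), Set.mem_range_self _⟩
    exact Set.range_eq_univ.mp huniv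

end
end

section
/- Let p : X̃ → X be a covering map where X̃ is a small loop space. Then a loop α at x ∈ X is small if and only if some lift of α to X̃ is a closed loop. -/
open CategoryTheory Topology

attribute [local instance] Path.Homotopic.setoid

noncomputable section

variable {X Y E : Type*} [TopologicalSpace X] [TopologicalSpace Y] [TopologicalSpace E]

section Lifting

open Set Metric

variable {E X : Type*} [TopologicalSpace E] [TopologicalSpace X] (p : C(E, X))

/-- Extension step for path lifting through a trivialization. -/
lemma extend_lift_s7 {F : Type*} [TopologicalSpace F] (T : Bundle.Trivialization F (⇑p))
    {γ : ℝ → X} (hγ : Continuous γ) {a b : ℝ} (hab : a ≤ b) (h0a : 0 ≤ a)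
    {g : ℝ → E} (hg : Continuous g) (hlift : ∀ s ∈ Icc (0:ℝ) a, p (g s) = γ s)
    (hT : ∀ s ∈ Icc a b, γ s ∈ T.baseSet) :
    ∃ g' : ℝ → E, Continuous g' ∧ g' 0 = g 0 ∧ (∀ s ∈ Icc (0:ℝ) b, p (g' s) = γ s) ∧
      g' b = T.toOpenPartialHomeomorph.symm (γ b, (T (g a)).2) := by
  have hmem : ∀ s : ℝ, γ (min (max s a) b) ∈ T.baseSet := fun s =>
    hT _ ⟨le_min (le_max_right _ _) hab, min_le_right _ _⟩
  set i := (T (g a)).2 with hi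
  set br : ℝ → E := fun s => T.toOpenPartialHomeomorph.symm (γ (min (max s a) b), i) with hbr
  have hbrc : Continuous br := by
    apply T.toOpenPartialHomeomorph.continuousOn_symm.comp_continuous
    · fun_prop
    · intro s
      rw [T.mem_target]
      exact hmem s
  have hpga : p (g a) ∈ T.baseSet := by
    rw [hlift a ⟨h0a, le_refl a⟩]; exact hT a ⟨le_refl a, hab⟩
  have hsrc : g a ∈ T.source := T.mem_source.2 hpga
  have hkey : br a = g a := by
    have h1 : (T (g a)).1 = p (g a) := T.coe_fst hsrc
    have h2 : γ a = (T (g a)).1 := by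
      rw [h1]; exact (hlift a ⟨h0a, le_refl a⟩).symm
    show T.toOpenPartialHomeomorph.symm (γ (min (max a a) b), i) = g a
    rw [max_self, min_eq_left hab, h2, hi, Prod.mk.eta]
    exact T.toOpenPartialHomeomorph.left_inv hsrc
  refine ⟨fun s => if s ≤ a then g s else br s, ?_, ?_, ?_, ?_⟩
  · exact Continuous.if_le hg hbrc continuous_id continuous_const
      (fun s hs => by rw [hs, hkey])
  · show (if (0:ℝ) ≤ a then g 0 else br 0) = g 0
    rw [if_pos h0a]
  · intro s hs
    show p (if s ≤ a then g s else br s) = γ s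
    by_cases h : s ≤ a
    · rw [if_pos h]; exact hlift s ⟨hs.1, h⟩
    · rw [if_neg h]
      have has : a ≤ s := le_of_not_ge h
      have : min (max s a) b = s := by rw [max_eq_left has, min_eq_left hs.2]
      show p (T.toOpenPartialHomeomorph.symm (γ (min (max s a) b), i)) = γ s
      rw [this]
      exact T.proj_symm_apply (T.mem_target.2 (hT s ⟨has, hs.2⟩))
  · show (if b ≤ a then g b else br b) = T.toOpenPartialHomeomorph.symm (γ b, i)
    rcases eq_or_lt_of_le hab with h | h
    · subst h
      rw [if_pos le_rfl, ← hkey]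
      show T.toOpenPartialHomeomorph.symm (γ (min (max a a) a), i) = _
      rw [max_self, min_self]
    · rw [if_neg (not_le.2 h)]
      show T.toOpenPartialHomeomorph.symm (γ (min (max b a) b), i) = _
      rw [max_eq_left hab, min_self]


lemma cov_triv (hp : IsCoveringMap ⇑p) (hsurj : Function.Surjective p) (x : X) :
    DiscreteTopology (p ⁻¹' {x}) ∧ ∃ T : Bundle.Trivialization (p ⁻¹' {x}) (⇑p), x ∈ T.baseSet := by
  have h := hp x
  haveI : Nonempty (p ⁻¹' {x}) := ⟨⟨(hsurj x).choose, (hsurj x).choose_spec⟩⟩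
  exact ⟨h.1, h.toTrivialization, h.mem_toTrivialization_baseSet⟩

lemma exists_lift' (hp : IsCoveringMap ⇑p) (hsurj : Function.Surjective p) {γ : ℝ → X} (hγ : Continuous γ)
    (e : E) (he : p e = γ 0) :
    ∃ g : ℝ → E, Continuous g ∧ g 0 = e ∧ ∀ s ∈ Icc (0:ℝ) 1, p (g s) = γ s := by
  set S : Set ℝ :=
    {t | (∃ g : ℝ → E, Continuous g ∧ g 0 = e ∧ ∀ s ∈ Icc (0:ℝ) t, p (g s) = γ s) ∧ t ≤ 1}
    with hS
  have h0S : (0:ℝ) ∈ S := by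
    refine ⟨⟨fun _ => e, continuous_const, rfl, fun s hs => ?_⟩, zero_le_one⟩
    obtain rfl : s = 0 := le_antisymm hs.2 hs.1
    exact he
  have hbdd : BddAbove S := ⟨1, fun t ht => ht.2⟩
  have hne : S.Nonempty := ⟨0, h0S⟩
  have key : ∀ c ∈ Icc (0:ℝ) 1, ∃ ε > 0, ∀ a ∈ S, c - ε < a → a ≤ c →
      ∀ b, c ≤ b → b < c + ε → b ≤ 1 → b ∈ S := by
    intro c hc
    obtain ⟨_, T, hT⟩ := cov_triv p hp hsurj (γ c)
    obtain ⟨ε, hε, hball⟩ := Metric.isOpen_iff.1 (T.open_baseSet.preimage hγ) c hT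
    refine ⟨ε, hε, fun a haS haε hac b hcb hbε hb1 => ?_⟩
    have ha'S : max a 0 ∈ S := by
      rcases le_total a 0 with h | h
      · rw [max_eq_right h]; exact h0S
      · rw [max_eq_left h]; exact haS
    have h0a' : 0 ≤ max a 0 := le_max_right _ _
    have ha'c : max a 0 ≤ c := max_le hac hc.1
    have ha'ε : c - ε < max a 0 := lt_of_lt_of_le haε (le_max_left _ _)
    obtain ⟨⟨g, hgc, hg0, hglift⟩, -⟩ := ha'S
    have hsub : ∀ s ∈ Icc (max a 0) b, γ s ∈ T.baseSet := by
      intro s hs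
      apply hball
      rw [mem_ball, Real.dist_eq, abs_sub_lt_iff]
      constructor <;> [skip; skip] <;>
        first
        | linarith [hs.1, hs.2]
        | linarith [hs.1, hs.2]
    obtain ⟨g', hc', h0', hl', -⟩ :=
      extend_lift_s7 p T hγ (le_trans ha'c hcb) h0a' hgc hglift hsub
    exact ⟨⟨g', hc', h0'.trans hg0, hl'⟩, hb1⟩
  have hc0 : 0 ≤ sSup S := le_csSup hbdd h0S
  have hc1 : sSup S ≤ 1 := csSup_le hne fun t ht => ht.2
  obtain ⟨ε, hε, hkey⟩ := key (sSup S) ⟨hc0, hc1⟩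
  have hcS : sSup S ∈ S := by
    obtain ⟨a, haS, haε⟩ := exists_lt_of_lt_csSup hne (by linarith : sSup S - ε < sSup S)
    exact hkey a haS haε (le_csSup hbdd haS) (sSup S) le_rfl (by linarith) hc1
  have hc1' : sSup S = 1 := by
    by_contra h
    have hlt : sSup S < 1 := lt_of_le_of_ne hc1 h
    have hb : min (sSup S + ε/2) 1 ∈ S :=
      hkey (sSup S) hcS (by linarith) le_rfl _ (le_min (by linarith) hlt.le)
        (lt_of_le_of_lt (min_le_left _ _) (by linarith)) (min_le_right _ _)
    have h1 : min (sSup S + ε/2) 1 ≤ sSup S := le_csSup hbdd hb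
    have h2 : sSup S < min (sSup S + ε/2) 1 := lt_min (by linarith) hlt
    linarith
  rw [hc1'] at hcS
  exact hcS.1

lemma monodromy (hp : IsCoveringMap ⇑p) (hsurj : Function.Surjective p) {H : ℝ × ℝ → X} (hH : Continuous H)
    (hbot : ∀ s, H (s, 0) = H (0, 0)) (htop : ∀ s, H (s, 1) = H (0, 1))
    {e : E} (he : p e = H (0, 0))
    {g₀ g₁ : ℝ → E} (h₀c : Continuous g₀) (h₁c : Continuous g₁)
    (h₀0 : g₀ 0 = e) (h₁0 : g₁ 0 = e)
    (h₀l : ∀ u ∈ Icc (0:ℝ) 1, p (g₀ u) = H (0, u))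
    (h₁l : ∀ u ∈ Icc (0:ℝ) 1, p (g₁ u) = H (1, u)) : g₀ 1 = g₁ 1 := by
  have hcol : ∀ s : ℝ, Continuous fun u => H (s, u) := fun s => hH.comp (by fun_prop)
  have hes : ∀ s : ℝ, p e = H (s, 0) := fun s => he.trans (hbot s).symm
  choose g hgc hg0 hgl using fun s : ℝ => exists_lift' p hp hsurj (hcol s) e (hes s)
  have huniq : ∀ s : ℝ, ∀ k : ℝ → E, Continuous k → k 0 = e →
      (∀ u ∈ Icc (0:ℝ) 1, p (k u) = H (s, u)) → k 1 = g s 1 := by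
    intro s k hkc hk0 hkl
    have := hp.eqOn_of_comp_eqOn (isPreconnected_Icc (a := (0:ℝ)) (b := 1))
      hkc.continuousOn (hgc s).continuousOn
      (fun u hu => by
        show p (k u) = p (g s u)
        rw [hkl u hu, hgl s u hu])
      (left_mem_Icc.2 zero_le_one) (hk0.trans (hg0 s).symm)
    exact this (right_mem_Icc.2 zero_le_one)
  -- local constancy of the endpoint map
  have hloc : ∀ s₀ : ℝ, ∃ ε > 0, ∀ s ∈ ball s₀ ε, g s 1 = g s₀ 1 := by
    intro s₀
    have hp' := cov_triv p hp hsurj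
    choose inst T hmemT using hp'
    obtain ⟨δ, hδ, hleb⟩ := lebesgue_number_lemma_of_metric
      (s := Icc (s₀ - 1) (s₀ + 1) ×ˢ Icc (0:ℝ) 1) (c := fun x => H ⁻¹' (T x).baseSet)
      (isCompact_Icc.prod isCompact_Icc)
      (fun x => (T x).open_baseSet.preimage hH)
      (fun z _ => mem_iUnion.2 ⟨H z, hmemT (H z)⟩)
    obtain ⟨n, hn⟩ := exists_nat_one_div_lt hδ
    set N : ℕ := n + 1 with hN
    have hNpos : (0:ℝ) < N := by positivity
    have hNδ : 1 / (N:ℝ) < δ := by rw [hN]; push_cast; exact hn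
    have main : ∀ j : ℕ, j ≤ N → ∃ Ej : ℝ → E, ContinuousOn Ej (ball s₀ (δ/2)) ∧
        ∀ s ∈ ball s₀ (δ/2), ∃ k : ℝ → E, Continuous k ∧ k 0 = e ∧
          (∀ u ∈ Icc (0:ℝ) ((j:ℝ)/N), p (k u) = H (s, u)) ∧ k ((j:ℝ)/N) = Ej s := by
      intro j
      induction j with
      | zero =>
        intro _
        refine ⟨fun _ => e, continuousOn_const, fun s _ =>
          ⟨fun _ => e, continuous_const, rfl, fun u hu => ?_, rfl⟩⟩
        obtain rfl : u = 0 := le_antisymm (by simpa using hu.2) hu.1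
        exact hes s
      | succ j ih =>
        intro hj
        obtain ⟨Ej, hEjc, hEj⟩ := ih (le_trans (Nat.le_succ j) hj)
        have hjN : (j:ℝ)/N ∈ Icc (0:ℝ) 1 := by
          constructor
          · positivity
          · rw [div_le_one hNpos]
            exact_mod_cast le_trans (Nat.le_succ j) hj
        have hj1N : ((j:ℝ)+1)/N ∈ Icc (0:ℝ) 1 := by
          constructor
          · positivity
          · rw [div_le_one hNpos]
            exact_mod_cast hj
        have hzK : ((s₀, (j:ℝ)/N)) ∈ Icc (s₀ - 1) (s₀ + 1) ×ˢ Icc (0:ℝ) 1 :=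
          ⟨⟨by linarith, by linarith⟩, hjN⟩
        obtain ⟨xj, hxj⟩ := hleb _ hzK
        have hstep : (j:ℝ)/N ≤ ((j:ℝ)+1)/N := by
          apply (div_le_div_iff_of_pos_right hNpos).mpr; linarith
        have hcov : ∀ s ∈ ball s₀ (δ/2), ∀ u ∈ Icc ((j:ℝ)/N) (((j:ℝ)+1)/N),
            H (s, u) ∈ (T xj).baseSet := by
          intro s hs u hu
          apply hxj
          rw [mem_ball, Prod.dist_eq, max_lt_iff]
          refine ⟨lt_trans (mem_ball.1 hs) (by linarith), ?_⟩
          rw [Real.dist_eq, abs_sub_lt_iff]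
          have h1 : ((j:ℝ)+1)/N - (j:ℝ)/N = 1/N := by ring
          constructor
          · linarith [hu.2]
          · linarith [hu.1]
        refine ⟨fun s => (T xj).toOpenPartialHomeomorph.symm
            (H (s, ((j:ℝ)+1)/N), (T xj (Ej s)).2), ?_, ?_⟩
        · -- continuity
          have hsrc : ∀ s ∈ ball s₀ (δ/2), Ej s ∈ (T xj).source := by
            intro s hs
            obtain ⟨k, hkc, hk0, hkl, hkend⟩ := hEj s hs
            rw [(T xj).mem_source, ← hkend, hkl _ ⟨hjN.1, le_rfl⟩]
            exact hcov s hs _ ⟨le_rfl, hstep⟩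
          have h1 : ContinuousOn (fun s => ((T xj) (Ej s)).2) (ball s₀ (δ/2)) :=
            continuous_snd.comp_continuousOn
              (((T xj).continuousOn_toFun).comp hEjc hsrc)
          apply (T xj).toOpenPartialHomeomorph.continuousOn_symm.comp
          · exact ((hH.comp (by fun_prop)).continuousOn).prodMk h1
          · intro s hs
            rw [(T xj).mem_target]
            exact hcov s hs _ ⟨hstep, le_rfl⟩
        · intro s hs
          obtain ⟨k, hkc, hk0, hkl, hkend⟩ := hEj s hs
          obtain ⟨k', hk'c, hk'0, hk'l, hk'end⟩ :=
            extend_lift_s7 p (T xj) (hcol s) hstep hjN.1 hkc hkl (hcov s hs)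
          refine ⟨k', hk'c, hk'0.trans hk0, ?_, ?_⟩
          · intro u hu
            have : (u:ℝ) ∈ Icc (0:ℝ) (((j:ℝ)+1)/N) := by
              refine ⟨hu.1, le_trans hu.2 (le_of_eq ?_)⟩
              push_cast; ring
            exact hk'l u this
          · rw [show (((j:ℕ)+1:ℕ):ℝ)/N = ((j:ℝ)+1)/N by push_cast; ring]
            rw [hk'end, hkend]
    obtain ⟨En, hEnc, hEn⟩ := main N le_rfl
    have hNN : ((N:ℝ))/N = 1 := div_self hNpos.ne'
    have hval : ∀ s ∈ ball s₀ (δ/2), g s 1 = En s := by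
      intro s hs
      obtain ⟨k, hkc, hk0, hkl, hkend⟩ := hEn s hs
      rw [hNN] at hkl hkend
      rw [← huniq s k hkc hk0 hkl, hkend]
    have hconst : ∀ s ∈ ball s₀ (δ/2), En s = En s₀ := by
      intro s hs
      refine hp.constOn_of_comp (convex_ball s₀ (δ/2)).isPreconnected hEnc
        (fun a ha a' ha' => ?_) hs (mem_ball_self (by linarith))
      have hv : ∀ b ∈ ball s₀ (δ/2), p (En b) = H (0,1) := by
        intro b hb
        obtain ⟨k, hkc, hk0, hkl, hkend⟩ := hEn b hb
        rw [hNN] at hkl hkend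
        rw [← hkend, hkl 1 ⟨zero_le_one, le_rfl⟩, htop]
      rw [hv a ha, hv a' ha']
    exact ⟨δ/2, by linarith, fun s hs =>
      (hval s hs).trans ((hconst s hs).trans (hval s₀ (mem_ball_self (by linarith))).symm)⟩
  -- global constancy
  have hglob : g 1 1 = g 0 1 := by
    have hA : IsClopen {s : ℝ | g s 1 = g 0 1} := by
      constructor
      · rw [← isOpen_compl_iff]
        rw [isOpen_iff_mem_nhds]
        intro s hs
        obtain ⟨ε, hε, hball⟩ := hloc s
        exact Filter.mem_of_superset (ball_mem_nhds s hε)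
          (fun y hy hy' => hs (show g s 1 = g 0 1 from (hball y hy).symm.trans hy'))
      · rw [isOpen_iff_mem_nhds]
        intro s hs
        obtain ⟨ε, hε, hball⟩ := hloc s
        exact Filter.mem_of_superset (ball_mem_nhds s hε)
          (fun y hy => show g y 1 = g 0 1 from (hball y hy).trans hs)
    have := hA.eq_univ (s := {s : ℝ | g s 1 = g 0 1}) ⟨0, rfl⟩
    exact (this ▸ mem_univ 1 : (1:ℝ) ∈ {s : ℝ | g s 1 = g 0 1})
  rw [huniq 0 g₀ h₀c h₀0 h₀l, huniq 1 g₁ h₁c h₁0 h₁l, hglob]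

end Lifting

/-- if `p : X̃ → X` is a covering with `X̃` a small loop space, then a loop `α`
at `x ∈ X` is small iff some lift of `α` to `X̃` is a closed loop. -/
theorem small_iff_exists_closed_lift {E X : Type*} [TopologicalSpace E] [TopologicalSpace X]
    (p : C(E, X)) (hp : IsCoveringMap p) (hsurj : Function.Surjective p)
    (hE : IsSmallLoopSpace E) (x : X) (α : Path x x) :
    IsSmall (fromLoop ⟦α⟧) ↔ ∃ (e : E) (alt : Path e e), ∀ t, p (alt t) = α t := by
  constructor
  · -- forward
    intro hsmall
    obtain ⟨_, T, hxT⟩ := cov_triv p hp hsurj x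
    obtain ⟨δ, hδT, hδα⟩ := hsmall T.baseSet (T.open_baseSet.mem_nhds hxT)
    have hq : (⟦δ⟧ : Path.Homotopic.Quotient x x) = ⟦α⟧ :=
      hδα
    obtain ⟨F⟩ : Path.Homotopic δ α := Quotient.exact hq
    obtain ⟨e₀, he₀⟩ := hsurj x
    set i := (T e₀).2 with hi
    set eb := T.toOpenPartialHomeomorph.symm (x, i) with heb
    have hpeb : p eb = x := T.proj_symm_apply (T.mem_target.2 hxT)
    set pr : ℝ → unitInterval := Set.projIcc 0 1 zero_le_one with hpr
    have hpr0 : pr 0 = 0 := Set.projIcc_left _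
    have hpr1 : pr 1 = 1 := Set.projIcc_right _
    set H : ℝ × ℝ → X := fun z => F (pr z.1, pr z.2) with hH
    have hHc : Continuous H := F.continuous.comp
      ((continuous_projIcc.comp continuous_fst).prodMk (continuous_projIcc.comp continuous_snd))
    have hbot : ∀ s, H (s, 0) = H (0, 0) := by
      intro s
      show F (pr s, pr 0) = F (pr 0, pr 0)
      rw [hpr0, F.source (pr s), F.source 0]
    have htop : ∀ s, H (s, 1) = H (0, 1) := by
      intro s
      show F (pr s, pr 1) = F (pr 0, pr 1)
      rw [hpr1, F.target (pr s), F.target (pr 0)]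
    have hH0 : ∀ u : ℝ, H (0, u) = δ (pr u) := by
      intro u
      show F (pr 0, pr u) = _
      rw [hpr0]
      exact F.apply_zero (pr u)
    have hH1 : ∀ u : ℝ, H (1, u) = α (pr u) := by
      intro u
      show F (pr 1, pr u) = _
      rw [hpr1]
      exact F.apply_one (pr u)
    have hpebH : p eb = H (0, 0) := by
      rw [hpeb, hH0, hpr0, δ.source]
    obtain ⟨g, hgc, hg0, hgl⟩ := exists_lift' p hp hsurj
      (γ := fun u => α (pr u)) (α.continuous.comp continuous_projIcc) eb
      (by show p eb = α (pr 0); rw [hpeb, hpr0, α.source])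
    set d : ℝ → E := fun u => T.toOpenPartialHomeomorph.symm (δ (pr u), i) with hd
    have hdc : Continuous d := by
      apply T.toOpenPartialHomeomorph.continuousOn_symm.comp_continuous
      · exact (δ.continuous.comp continuous_projIcc).prodMk continuous_const
      · intro u
        rw [T.mem_target]
        exact hδT (pr u)
    have hdl : ∀ u : ℝ, p (d u) = δ (pr u) := fun u =>
      T.proj_symm_apply (T.mem_target.2 (hδT _))
    have hd0 : d 0 = eb := by
      show T.toOpenPartialHomeomorph.symm (δ (pr 0), i) = eb
      rw [hpr0, δ.source]
    have hd1 : d 1 = eb := by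
      show T.toOpenPartialHomeomorph.symm (δ (pr 1), i) = eb
      rw [hpr1, δ.target]
    have hend : d 1 = g 1 := by
      refine monodromy p hp hsurj hHc hbot htop (e := eb) hpebH hdc hgc hd0 hg0 ?_ ?_
      · intro u _; rw [hdl u, hH0]
      · intro u hu; rw [hgl u hu, hH1]
    have hg1 : g 1 = eb := by rw [← hend, hd1]
    refine ⟨eb, ⟨⟨fun t => g ↑t, hgc.comp continuous_subtype_val⟩, ?_, ?_⟩, ?_⟩
    · show g ((0 : unitInterval) : ℝ) = eb
      rw [Set.Icc.coe_zero, hg0]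
    · show g ((1 : unitInterval) : ℝ) = eb
      rw [Set.Icc.coe_one, hg1]
    · intro t
      show p (g ↑t) = α t
      rw [hgl ↑t t.2]
      congr 1
      rw [hpr]
      exact Set.projIcc_val zero_le_one t
  · -- backward
    rintro ⟨e, alt, halt⟩
    have hpe : p e = x := by
      have h := halt 0
      rwa [alt.source, α.source] at h
    subst hpe
    intro U hU
    have hU' : (⇑p) ⁻¹' U ∈ nhds e := p.continuous.continuousAt.preimage_mem_nhds hU
    obtain ⟨δ, hδ, hδalt⟩ := hE.2.2 e (fromLoop ⟦alt⟧) _ hU'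
    have h1 : (⟦δ⟧ : Path.Homotopic.Quotient e e) = ⟦alt⟧ :=
      hδalt
    have h2 : Path.Homotopic δ alt := Quotient.exact h1
    have h3 : alt.map p.continuous = α := by
      apply Path.ext
      funext t
      exact halt t
    refine ⟨δ.map p.continuous, fun t => hδ t, ?_⟩
    have h4 : (⟦δ.map p.continuous⟧ : Path.Homotopic.Quotient _ _)
        = ⟦alt.map p.continuous⟧ := Quotient.sound (Path.Homotopic.map h2 p)
    rw [h4, h3]

end
end

section
/- A small covering p : X̃ → X is a universal object in the category of coverings of X: for every covering q : Ỹ → X with Ỹ path connected, there exists a covering map f : X̃ → Ỹ with q ∘ f = p. -/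
open CategoryTheory Topology

attribute [local instance] Path.Homotopic.setoid

noncomputable section
namespace SmallCovAux
open Topology unitInterval Set

/-- Preimage in `I` of a convex set of reals is preconnected. -/
lemma preconn_val_preimage (s : Set ℝ) (hs : Convex ℝ s) :
    _root_.IsPreconnected ((↑) ⁻¹' s : Set I) := by
  rw [← Topology.IsInducing.subtypeVal.isPreconnected_image]
  rw [Subtype.image_preimage_coe]
  exact (((convex_Icc (0:ℝ) 1).inter hs)).isPreconnected

lemma isPreconnected_Icc_I (a b : I) : _root_.IsPreconnected (Icc a b) := by
  have h : (Icc a b : Set I) = (↑) ⁻¹' (Icc (a:ℝ) (b:ℝ)) := by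
    ext u; simp [Subtype.coe_le_coe]
  rw [h]
  exact preconn_val_preimage _ (convex_Icc _ _)

variable {F X : Type*} [TopologicalSpace F] [TopologicalSpace X] {q : F → X}

section FibNe
variable [∀ x : X, Nonempty (q ⁻¹' {x})]

theorem exists_liftCM (hq : IsCoveringMap q) (γ : C(I, X)) (f₀ : F) (h₀ : q f₀ = γ 0) :
    ∃ Γ : C(I, F), Γ 0 = f₀ ∧ ∀ u, q (Γ u) = γ u := by
  obtain ⟨T, hT0, hTmono, ⟨n₀, hTn₀⟩, hTcov⟩ :=
    exists_monotone_Icc_subset_open_cover_unitInterval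
      (c := fun x : X => γ ⁻¹' ((hq x).toTrivialization.baseSet))
      (fun x => ((hq x).toTrivialization.open_baseSet).preimage γ.continuous)
      (fun u _ => Set.mem_iUnion.2 ⟨γ u, (hq (γ u)).mem_toTrivialization_baseSet⟩)
  suffices h : ∀ m, ∃ Γ : C(I, F), Γ 0 = f₀ ∧ ∀ u : I, u ≤ T m → q (Γ u) = γ u by
    obtain ⟨Γ, h1, h2⟩ := h n₀
    exact ⟨Γ, h1, fun u => h2 u (by rw [hTn₀ n₀ le_rfl]; exact le_one u)⟩
  intro m
  induction m with
  | zero =>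
    refine ⟨ContinuousMap.const I f₀, rfl, fun u hu => ?_⟩
    have hu0 : u = 0 := le_antisymm (by rwa [hT0] at hu) u.2.1
    subst hu0
    simpa using h₀
  | succ m ih =>
    obtain ⟨Γ, hΓ0, hΓ⟩ := ih
    obtain ⟨xm, hsub⟩ := hTcov m
    set t := (hq xm).toTrivialization with ht
    have hTle : T m ≤ T (m + 1) := hTmono (Nat.le_succ m)
    have hclamp_mem : ∀ u : I, (⟨max (T m : ℝ) (min (u : ℝ) (T (m+1) : ℝ)),
        le_trans (T m).2.1 (le_max_left _ _),
        max_le (T m).2.2 (le_trans (min_le_right _ _) (T (m+1)).2.2)⟩ : I) ∈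
        Icc (T m) (T (m + 1)) := by
      intro u
      constructor
      · exact Subtype.coe_le_coe.1 (le_max_left _ _)
      · exact Subtype.coe_le_coe.1
          (max_le (Subtype.coe_le_coe.2 hTle) (min_le_right _ _))
    set clamp : I → I := fun u => ⟨max (T m : ℝ) (min (u : ℝ) (T (m+1) : ℝ)),
        le_trans (T m).2.1 (le_max_left _ _),
        max_le (T m).2.2 (le_trans (min_le_right _ _) (T (m+1)).2.2)⟩ with hclampdef
    have hclamp_cont : Continuous clamp :=
      (continuous_const.max (continuous_subtype_val.min continuous_const)).subtype_mk _
    have hmemV : ∀ u : I, γ (clamp u) ∈ t.baseSet := fun u => hsub (hclamp_mem u)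
    have hTmV : γ (T m) ∈ t.baseSet := hsub ⟨le_rfl, hTle⟩
    have hΓsrc : Γ (T m) ∈ t.source := t.mem_source.2 (by rw [hΓ (T m) le_rfl]; exact hTmV)
    set c := (t (Γ (T m))).2 with hc
    have helse_cont : Continuous fun u : I => t.toOpenPartialHomeomorph.symm (γ (clamp u), c) := by
      refine (t.toOpenPartialHomeomorph.continuousOn_symm).comp_continuous
        (((γ.continuous.comp hclamp_cont)).prodMk continuous_const) ?_
      intro u
      exact t.mem_target.2 (hmemV u)
    have hagree : ∀ u : I, (u : ℝ) = (T m : ℝ) →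
        Γ u = t.toOpenPartialHomeomorph.symm (γ (clamp u), c) := by
      intro u hu
      rw [show u = T m from Subtype.ext hu]
      have hcl : clamp (T m) = T m := Subtype.ext (by
        show max (T m : ℝ) (min (T m : ℝ) (T (m+1) : ℝ)) = (T m : ℝ)
        rw [min_eq_left (Subtype.coe_le_coe.2 hTle), max_self])
      rw [hcl]
      have hqq : γ (T m) = q (Γ (T m)) := (hΓ (T m) le_rfl).symm
      rw [hqq]
      exact (t.symm_apply_mk_proj hΓsrc).symm
    refine ⟨⟨fun u => if (u : ℝ) ≤ (T m : ℝ) then Γ u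
      else t.toOpenPartialHomeomorph.symm (γ (clamp u), c), ?_⟩, ?_, ?_⟩
    · exact Continuous.if_le Γ.continuous helse_cont continuous_subtype_val continuous_const hagree
    · show (if ((0:I) : ℝ) ≤ (T m : ℝ) then Γ 0 else _) = f₀
      rw [if_pos (show ((0:I):ℝ) ≤ (T m : ℝ) from (T m).2.1)]
      exact hΓ0
    · intro u hu
      by_cases hcase : (u : ℝ) ≤ (T m : ℝ)
      · show q (if (u : ℝ) ≤ (T m : ℝ) then Γ u else _) = γ u
        rw [if_pos hcase]
        exact hΓ u hcase
      · show q (if (u : ℝ) ≤ (T m : ℝ) then Γ u else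
          t.toOpenPartialHomeomorph.symm (γ (clamp u), c)) = γ u
        rw [if_neg hcase]
        have hcl : clamp u = u := Subtype.ext (by
          show max (T m : ℝ) (min (u : ℝ) (T (m+1) : ℝ)) = (u : ℝ)
          rw [min_eq_left (Subtype.coe_le_coe.2 hu), max_eq_right (le_of_not_ge hcase)])
        rw [hcl]
        exact t.proj_symm_apply (t.mem_target.2 (by rw [← hcl]; exact hmemV u))


/-- The chosen lift of a continuous map from `I` through a covering map. -/
def liftCM (hq : IsCoveringMap q) (γ : C(I, X)) (f₀ : F) (h₀ : q f₀ = γ 0) : C(I, F) :=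
  (exists_liftCM hq γ f₀ h₀).choose

lemma liftCM_zero (hq : IsCoveringMap q) (γ : C(I, X)) (f₀ : F) (h₀ : q f₀ = γ 0) :
    liftCM hq γ f₀ h₀ 0 = f₀ :=
  (exists_liftCM hq γ f₀ h₀).choose_spec.1

lemma liftCM_proj (hq : IsCoveringMap q) (γ : C(I, X)) (f₀ : F) (h₀ : q f₀ = γ 0) (u : I) :
    q (liftCM hq γ f₀ h₀ u) = γ u :=
  (exists_liftCM hq γ f₀ h₀).choose_spec.2 u

lemma liftCM_unique (hq : IsCoveringMap q) (γ : C(I, X)) (f₀ : F) (h₀ : q f₀ = γ 0)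
    (Γ : C(I, F)) (h1 : Γ 0 = f₀) (h2 : ∀ u, q (Γ u) = γ u) (u : I) :
    Γ u = liftCM hq γ f₀ h₀ u := by
  have := hq.eq_of_comp_eq (g₁ := ⇑Γ) (g₂ := ⇑(liftCM hq γ f₀ h₀)) Γ.continuous
    (liftCM hq γ f₀ h₀).continuous
    (funext fun v => (h2 v).trans (liftCM_proj hq γ f₀ h₀ v).symm) 0
    (h1.trans (liftCM_zero hq γ f₀ h₀).symm)
  exact congrFun this u

variable {x₀ x₁ x₂ : X}

/-- Endpoint of the chosen lift of a path. -/
def pathLiftEnd (hq : IsCoveringMap q) (γ : Path x₀ x₁) (f₀ : F) (h₀ : q f₀ = x₀) : F :=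
  liftCM hq γ.toContinuousMap f₀ (by simpa using h₀) 1

/-- The chosen lift of a path, as a path. -/
def pathLiftPath (hq : IsCoveringMap q) (γ : Path x₀ x₁) (f₀ : F) (h₀ : q f₀ = x₀) :
    Path f₀ (pathLiftEnd hq γ f₀ h₀) where
  toContinuousMap := liftCM hq γ.toContinuousMap f₀ (by simpa using h₀)
  source' := liftCM_zero _ _ _ _
  target' := rfl

lemma pathLiftPath_proj (hq : IsCoveringMap q) (γ : Path x₀ x₁) (f₀ : F) (h₀ : q f₀ = x₀)
    (u : I) : q (pathLiftPath hq γ f₀ h₀ u) = γ u :=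
  liftCM_proj hq γ.toContinuousMap f₀ (by simpa using h₀) u

lemma pathLiftEnd_proj (hq : IsCoveringMap q) (γ : Path x₀ x₁) (f₀ : F) (h₀ : q f₀ = x₀) :
    q (pathLiftEnd hq γ f₀ h₀) = x₁ := by
  have := liftCM_proj hq γ.toContinuousMap f₀ (by simpa using h₀) 1
  simp at this; exact this

/-- Any lift of `γ` starting at `f₀` has the same endpoint as the chosen lift. -/
lemma pathLiftEnd_unique (hq : IsCoveringMap q) (γ : Path x₀ x₁) (f₀ : F) (h₀ : q f₀ = x₀)
    {w : F} (Γ : Path f₀ w) (hl : ∀ u, q (Γ u) = γ u) :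
    pathLiftEnd hq γ f₀ h₀ = w := by
  have h := liftCM_unique hq γ.toContinuousMap f₀ (by simpa using h₀) Γ.toContinuousMap
    (by simpa using Γ.source) (fun u => by simpa using hl u) 1
  have h1 : Γ.toContinuousMap 1 = w := by simpa using Γ.target
  exact h.symm.trans h1

lemma pathLiftEnd_self (hq : IsCoveringMap q) {f₀ w : F} (κ : Path f₀ w)
    (hc : Continuous q) :
    pathLiftEnd hq (κ.map hc) f₀ rfl = w :=
  pathLiftEnd_unique hq (κ.map hc) f₀ rfl κ (fun u => rfl)

lemma pathLiftEnd_trans (hq : IsCoveringMap q) (γ : Path x₀ x₁) (γ' : Path x₁ x₂)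
    (f₀ : F) (h₀ : q f₀ = x₀) :
    pathLiftEnd hq (γ.trans γ') f₀ h₀ =
      pathLiftEnd hq γ' (pathLiftEnd hq γ f₀ h₀) (pathLiftEnd_proj hq γ f₀ h₀) := by
  refine pathLiftEnd_unique hq (γ.trans γ') f₀ h₀
    ((pathLiftPath hq γ f₀ h₀).trans
      (pathLiftPath hq γ' (pathLiftEnd hq γ f₀ h₀) (pathLiftEnd_proj hq γ f₀ h₀))) ?_
  intro u
  rw [Path.trans_apply, Path.trans_apply]
  split_ifs with h
  · exact pathLiftPath_proj hq γ f₀ h₀ _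
  · exact pathLiftPath_proj hq γ' _ _ _

lemma pathLiftEnd_symm (hq : IsCoveringMap q) (γ : Path x₀ x₁) (f₀ : F) (h₀ : q f₀ = x₀) :
    pathLiftEnd hq γ.symm (pathLiftEnd hq γ f₀ h₀) (pathLiftEnd_proj hq γ f₀ h₀) = f₀ := by
  refine pathLiftEnd_unique hq γ.symm _ _ (pathLiftPath hq γ f₀ h₀).symm ?_
  intro u
  show q (pathLiftPath hq γ f₀ h₀ (unitInterval.symm u)) = γ (unitInterval.symm u)
  exact pathLiftPath_proj hq γ f₀ h₀ _

lemma pathLiftEnd_symm_cancel (hq : IsCoveringMap q) (γ : Path x₀ x₁) {b f₀ : F}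
    (hb : q b = x₁) (h₀ : q f₀ = x₀)
    (h : pathLiftEnd hq γ.symm b hb = f₀) :
    pathLiftEnd hq γ f₀ h₀ = b := by
  subst h
  refine pathLiftEnd_unique hq γ _ h₀ (pathLiftPath hq γ.symm b hb).symm ?_
  intro u
  show q (pathLiftPath hq γ.symm b hb (unitInterval.symm u)) = γ u
  rw [pathLiftPath_proj hq γ.symm b hb (unitInterval.symm u)]
  show γ (unitInterval.symm (unitInterval.symm u)) = γ u
  rw [unitInterval.symm_symm]

/-- A path staying inside the base set of a trivialization lifts along the local section. -/
lemma pathLiftEnd_triv (hq : IsCoveringMap q) (γ : Path x₀ x₁) (f₀ : F) (h₀ : q f₀ = x₀)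
    {Z : Type*} [TopologicalSpace Z] (t : Bundle.Trivialization Z q)
    (hmem : ∀ u, γ u ∈ t.baseSet) :
    pathLiftEnd hq γ f₀ h₀ = t.toOpenPartialHomeomorph.symm (x₁, (t f₀).2) := by
  have hf₀src : f₀ ∈ t.source := t.mem_source.2 (by rw [h₀]; simpa using hmem 0)
  have hcont : Continuous fun u : I => t.toOpenPartialHomeomorph.symm (γ u, (t f₀).2) := by
    refine (t.toOpenPartialHomeomorph.continuousOn_symm).comp_continuous
      ((γ.continuous.prodMk continuous_const)) ?_
    intro u
    exact t.mem_target.2 (hmem u)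
  refine pathLiftEnd_unique hq γ f₀ h₀
    ⟨⟨fun u => t.toOpenPartialHomeomorph.symm (γ u, (t f₀).2), hcont⟩, ?_, ?_⟩ ?_
  · show t.toOpenPartialHomeomorph.symm (γ 0, (t f₀).2) = f₀
    rw [show γ 0 = q f₀ by rw [h₀]; exact γ.source]
    exact t.symm_apply_mk_proj hf₀src
  · show t.toOpenPartialHomeomorph.symm (γ 1, (t f₀).2) = _
    rw [γ.target]
  · intro u
    exact t.proj_symm_apply (t.mem_target.2 (hmem u))


section Monodromy

variable {x₀ x₁ : X}

/-- The path at time `s` of a path homotopy. -/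
def homPath {γ γ' : Path x₀ x₁} (H : Path.Homotopy γ γ') (s : I) : Path x₀ x₁ where
  toContinuousMap := H.toHomotopy.toContinuousMap.curry s
  source' := H.source s
  target' := H.target s

lemma homPath_apply {γ γ' : Path x₀ x₁} (H : Path.Homotopy γ γ') (s u : I) :
    homPath H s u = H (s, u) := rfl

theorem pathLiftEnd_homotopic (hq : IsCoveringMap q) (γ γ' : Path x₀ x₁)
    (hom : γ.Homotopic γ') (f₀ : F) (h₀ : q f₀ = x₀) :
    pathLiftEnd hq γ f₀ h₀ = pathLiftEnd hq γ' f₀ h₀ := by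
  obtain ⟨H⟩ := hom
  set HC : C(I × I, X) := H.toHomotopy.toContinuousMap with hHC
  -- the lift of the path at time s, and its endpoint
  set Γend : I → F := fun s => pathLiftEnd hq (homPath H s) f₀ h₀ with hΓend
  let Γat : (s : I) → Path f₀ (Γend s) := fun s => pathLiftPath hq (homPath H s) f₀ h₀
  -- partition of the square
  obtain ⟨T, hT0, hTmono, ⟨n₀, hTn₀⟩, hTcov⟩ :=
    exists_monotone_Icc_subset_open_cover_unitInterval_prod_self
      (c := fun x : X => ⇑HC ⁻¹' ((hq x).toTrivialization.baseSet))
      (fun x => ((hq x).toTrivialization.open_baseSet).preimage HC.continuous)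
      (fun z _ => Set.mem_iUnion.2 ⟨HC z, (hq (HC z)).mem_toTrivialization_baseSet⟩)
  have hproj : ∀ (s' u : I), q (Γat s' u) = HC (s', u) := fun s' u =>
    pathLiftPath_proj hq (homPath H s') f₀ h₀ u
  -- main cell claim
  have cell : ∀ k : ℕ, ∀ s ∈ Icc (T k) (T (k+1)), Γend s = Γend (T k) := by
    intro k
    set J := Icc (T k) (T (k+1)) with hJ
    have hTkJ : T k ∈ J := ⟨le_rfl, hTmono (Nat.le_succ k)⟩
    have hJpre : _root_.IsPreconnected J := isPreconnected_Icc_I _ _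
    -- trivializations along the strip
    set xk : ℕ → X := fun m => (hTcov k m).choose with hxkdef
    have hxk : ∀ m, Icc (T k) (T (k+1)) ×ˢ Icc (T m) (T (m+1)) ⊆
        ⇑HC ⁻¹' ((hq (xk m)).toTrivialization.baseSet) := fun m => (hTcov k m).choose_spec
    let t_ : (m : ℕ) → Bundle.Trivialization (↥(q ⁻¹' {xk m})) q :=
      fun m => (hq (xk m)).toTrivialization
    have hmemH : ∀ (m : ℕ), ∀ s' ∈ J, ∀ u ∈ Icc (T m) (T (m+1)),
        HC (s', u) ∈ (t_ m).baseSet := fun m s' hs' u hu => hxk m ⟨hs', hu⟩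
    have hsrc : ∀ (m : ℕ), ∀ s' ∈ J, ∀ u ∈ Icc (T m) (T (m+1)),
        Γat s' u ∈ (t_ m).source := fun m s' hs' u hu =>
      (t_ m).mem_source.2 (by rw [hproj s' u]; exact hmemH m s' hs' u hu)
    have hidx : ∀ (m : ℕ), ∀ s' ∈ J, ∀ u ∈ Icc (T m) (T (m+1)),
        ((t_ m) (Γat s' u)).2 = ((t_ m) (Γat s' (T m))).2 := by
      intro m s' hs' u hu
      haveI : DiscreteTopology ↥(q ⁻¹' {xk m}) := (hq (xk m)).1
      refine (isPreconnected_Icc_I (T m) (T (m+1))).constant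
        (f := fun v => ((t_ m) (Γat s' v)).2) ?_ hu ⟨le_rfl, hTmono (Nat.le_succ m)⟩
      refine continuous_snd.comp_continuousOn ?_
      exact (t_ m).toOpenPartialHomeomorph.continuousOn.comp ((Γat s').continuous.continuousOn)
        (fun v hv => hsrc m s' hs' v hv)
    have hpd : ∀ (m : ℕ), ∀ s' ∈ J, Γat s' (T (m+1)) =
        (t_ m).toOpenPartialHomeomorph.symm (HC (s', T (m+1)), ((t_ m) (Γat s' (T m))).2) := by
      intro m s' hs'
      have hmem1 : T (m+1) ∈ Icc (T m) (T (m+1)) := ⟨hTmono (Nat.le_succ m), le_rfl⟩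
      rw [← hidx m s' hs' (T (m+1)) hmem1, ← hproj s' (T (m+1))]
      exact ((t_ m).symm_apply_mk_proj (hsrc m s' hs' (T (m+1)) hmem1)).symm
    have hP : ∀ (m : ℕ), ∀ s' ∈ J,
        ((t_ m) (Γat s' (T m))).2 = ((t_ m) (Γat (T k) (T m))).2 := by
      intro m
      induction m with
      | zero =>
        intro s' hs'
        have e1 : ∀ s'' : I, Γat s'' (T 0) = f₀ := fun s'' => by
          rw [hT0]; exact (Γat s'').source
        rw [e1 s', e1 (T k)]
      | succ m ih =>
        intro s' hs'
        have key : ∀ s'' , s'' ∈ J → Γat s'' (T (m+1)) =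
            (t_ m).toOpenPartialHomeomorph.symm
              (HC (s'', T (m+1)), ((t_ m) (Γat (T k) (T m))).2) := fun s'' hs'' => by
          rw [hpd m s'' hs'', ih s'' hs'']
        haveI : DiscreteTopology ↥(q ⁻¹' {xk (m+1)}) := (hq (xk (m+1))).1
        have hmem1 : T (m+1) ∈ Icc (T m) (T (m+1)) := ⟨hTmono (Nat.le_succ m), le_rfl⟩
        have hmem2 : T (m+1) ∈ Icc (T (m+1)) (T (m+2)) := ⟨le_rfl, hTmono (Nat.le_succ (m+1))⟩
        have hcont : ContinuousOn (fun s'' : I => ((t_ (m+1)) ((t_ m).toOpenPartialHomeomorph.symm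
            (HC (s'', T (m+1)), ((t_ m) (Γat (T k) (T m))).2))).2) J := by
          refine continuous_snd.comp_continuousOn ?_
          refine (t_ (m+1)).toOpenPartialHomeomorph.continuousOn.comp ?_ ?_
          · refine ((t_ m).toOpenPartialHomeomorph.continuousOn_symm).comp ?_ ?_
            · exact ((HC.continuous.comp (continuous_id.prodMk continuous_const)).prodMk
                continuous_const).continuousOn
            · intro s'' hs''
              exact (t_ m).mem_target.2 (hmemH m s'' hs'' (T (m+1)) hmem1)
          · intro s'' hs''
            refine (t_ (m+1)).mem_source.2 ?_
            rw [(t_ m).proj_symm_apply ((t_ m).mem_target.2 (hmemH m s'' hs'' (T (m+1)) hmem1))]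
            exact hmemH (m+1) s'' hs'' (T (m+1)) hmem2
        have hconst := hJpre.constant hcont hs' hTkJ
        rw [key s' hs', key (T k) hTkJ]
        exact hconst
    -- conclude at the top of the square
    intro s hs
    have hT1 : T (n₀+1) = 1 := hTn₀ (n₀+1) (Nat.le_succ n₀)
    have key : ∀ s'' , s'' ∈ J → Γat s'' (T (n₀+1)) =
        (t_ n₀).toOpenPartialHomeomorph.symm
          (x₁, ((t_ n₀) (Γat (T k) (T n₀))).2) := by
      intro s'' hs''
      rw [hpd n₀ s'' hs'', hP n₀ s'' hs'']
      congr 2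
      rw [hT1]
      exact H.target s''
    have e1 : Γat s (T (n₀+1)) = Γat (T k) (T (n₀+1)) := by
      rw [key s hs, key (T k) hTkJ]
    have e2 : ∀ s'' : I, Γat s'' (T (n₀+1)) = Γend s'' := fun s'' => by
      rw [hT1]; exact (Γat s'').target
    rw [← e2 s, ← e2 (T k), e1]
  -- chain the cells together
  have chain : ∀ k : ℕ, Γend (T k) = Γend (T 0) := by
    intro k
    induction k with
    | zero => rfl
    | succ k ih =>
      rw [← ih]
      exact cell k (T (k+1)) ⟨hTmono (Nat.le_succ k), le_rfl⟩
  have h1 : pathLiftEnd hq γ f₀ h₀ = Γend 0 := by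
    refine (pathLiftEnd_unique hq γ f₀ h₀ (Γat 0) ?_).symm.symm
    intro u
    rw [hproj 0 u]
    show H (0, u) = γ u
    simpa using H.apply_zero u
  have h2 : pathLiftEnd hq γ' f₀ h₀ = Γend 1 := by
    refine (pathLiftEnd_unique hq γ' f₀ h₀ (Γat 1) ?_).symm.symm
    intro u
    rw [hproj 1 u]
    show H (1, u) = γ' u
    simpa using H.apply_one u
  have h3 : Γend 1 = Γend (T n₀) := by rw [hTn₀ n₀ le_rfl]
  rw [h1, h2, h3, chain n₀, hT0]

end Monodromy

end FibNe


/-- A covering of a preconnected space with nonempty total space is surjective. -/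
theorem covering_surjective (hq : IsCoveringMap q) [PreconnectedSpace X] [Nonempty F] :
    Function.Surjective q := by
  have hclopen : IsClopen {x : X | ∃ w, q w = x} := by
    constructor
    · rw [← isOpen_compl_iff]
      rw [isOpen_iff_mem_nhds]
      intro x hx
      obtain ⟨-, U, hxU, hU, -, H, -⟩ := hq x
      refine Filter.mem_of_superset (hU.mem_nhds hxU) ?_
      intro x' hx' hmem
      obtain ⟨w', hw'⟩ := hmem
      have hw'U : w' ∈ q ⁻¹' U := by show q w' ∈ U; rw [hw']; exact hx'
      exact hx ⟨((H ⟨w', hw'U⟩).2 : q ⁻¹' {x}), ((H ⟨w', hw'U⟩).2).2⟩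
    · rw [isOpen_iff_mem_nhds]
      intro x hx
      obtain ⟨w, hw⟩ := hx
      haveI : Nonempty (q ⁻¹' {x}) := ⟨⟨w, hw⟩⟩
      set t := (hq x).toTrivialization
      refine Filter.mem_of_superset
        (t.open_baseSet.mem_nhds ((hq x).mem_toTrivialization_baseSet)) ?_
      intro x' hx'
      exact ⟨t.toOpenPartialHomeomorph.symm (x', (t w).2), t.proj_symm_apply' hx'⟩
  have huniv : {x : X | ∃ w, q w = x} = Set.univ :=
    hclopen.eq_univ ⟨q (Classical.arbitrary F), ⟨Classical.arbitrary F, rfl⟩⟩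
  intro x
  have : x ∈ {x : X | ∃ w, q w = x} := huniv ▸ Set.mem_univ x
  exact this

/-- Points of the total space of a local homeomorphism into a locally path connected space
have small open path connected neighborhoods. -/
theorem exists_pc_nhd {E : Type*} [TopologicalSpace E] {p : E → X} [LocallyPathConnectedSpace X]
    (hp : IsLocalHomeomorph p) (e : E) {N : Set E} (hN : IsOpen N) (he : e ∈ N) :
    ∃ O : Set E, IsOpen O ∧ e ∈ O ∧ O ⊆ N ∧ IsPathConnected O := by
  obtain ⟨φ₀, heφ, hpφ⟩ := hp e
  subst hpφ
  set φ := φ₀.restrOpen N hN with hφ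
  have heφ' : e ∈ φ.source := by
    rw [hφ, OpenPartialHomeomorph.restrOpen_source]
    exact ⟨heφ, he⟩
  have hφe_tgt : φ e ∈ φ.target := φ.map_source heφ'
  set V := pathComponentIn φ.target (φ e) with hV
  have hVopen : IsOpen V := φ.open_target.pathComponentIn _
  have hVpc : IsPathConnected V := isPathConnected_pathComponentIn hφe_tgt
  have hVsub : V ⊆ φ.target := pathComponentIn_subset
  refine ⟨φ.source ∩ φ ⁻¹' V, φ.isOpen_inter_preimage hVopen, ⟨heφ', ?_⟩, ?_, ?_⟩
  · exact mem_pathComponentIn_self hφe_tgt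
  · intro a ha
    have : a ∈ φ.source := ha.1
    rw [hφ, OpenPartialHomeomorph.restrOpen_source] at this
    exact this.2
  · have himg : φ.source ∩ φ ⁻¹' V = φ.symm '' V := by
      ext a
      constructor
      · rintro ⟨ha1, ha2⟩
        exact ⟨φ a, ha2, φ.left_inv ha1⟩
      · rintro ⟨v, hv, rfl⟩
        refine ⟨φ.map_target (hVsub hv), ?_⟩
        show φ (φ.symm v) ∈ V
        rwa [φ.right_inv (hVsub hv)]
    rw [himg]
    exact hVpc.image' (φ.continuousOn_symm.mono hVsub)

end SmallCovAux
end


noncomputable section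

variable {X Y E : Type*} [TopologicalSpace X] [TopologicalSpace Y] [TopologicalSpace E]

/-- a small covering `p : X̃ → X` is a universal object in the category of
coverings of `X`: every covering `q : Ỹ → X` with `Ỹ` path connected is factored through by
a covering map `f : X̃ → Ỹ` with `q ∘ f = p`. -/
theorem small_covering_is_universal {E X F : Type*} [TopologicalSpace E] [TopologicalSpace X]
    [TopologicalSpace F] [PathConnectedSpace X] [LocallyPathConnectedSpace X]
    [PathConnectedSpace F]
    (p : C(E, X)) (hp : IsCoveringMap p) (hE : IsSmallLoopSpace E)
    (q : C(F, X)) (hq : IsCoveringMap q) :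
    ∃ f : C(E, F), IsCoveringMap f ∧ ∀ e : E, q (f e) = p e := by
  classical
  obtain ⟨hEpc, -, hSmall⟩ := hE
  haveI : PathConnectedSpace E := hEpc
  haveI : Nonempty E := hEpc.nonempty
  set pc : Continuous ⇑p := p.continuous with hpc
  set e₀ : E := Classical.arbitrary E with he₀
  obtain ⟨f₀, hf₀⟩ := SmallCovAux.covering_surjective hq (p e₀)
  haveI : ∀ x : X, Nonempty (q ⁻¹' {x}) := fun x =>
    ⟨⟨_, (SmallCovAux.covering_surjective hq x).choose_spec⟩⟩
  haveI : ∀ x : X, Nonempty (p ⁻¹' {x}) := fun x =>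
    ⟨⟨_, (SmallCovAux.covering_surjective hp x).choose_spec⟩⟩
  -- choice of paths from the base point
  set α : (e : E) → Path e₀ e := fun e => PathConnectedSpace.somePath e₀ e with hα
  set fdef : E → F := fun e => SmallCovAux.pathLiftEnd hq ((α e).map pc) f₀ hf₀ with hfdef
  -- well-definedness: the endpoint does not depend on the chosen path
  have hgen : ∀ (e : E) (β β' : Path e₀ e),
      SmallCovAux.pathLiftEnd hq (β.map pc) f₀ hf₀ =
        SmallCovAux.pathLiftEnd hq (β'.map pc) f₀ hf₀ := by
    intro e β β'
    set lam : Path e₀ e₀ := β.trans β'.symm with hlam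
    set t₀ := (hq (p e₀)).toTrivialization with ht₀
    obtain ⟨δ, hδU, hδeq⟩ := hSmall e₀ (fromLoop ⟦lam⟧) (⇑p ⁻¹' t₀.baseSet)
      ((t₀.open_baseSet.preimage pc).mem_nhds ((hq (p e₀)).mem_toTrivialization_baseSet))
    have hquot : (⟦δ⟧ : Path.Homotopic.Quotient e₀ e₀) = ⟦lam⟧ :=
      hδeq
    have hδlam : δ.Homotopic lam := Quotient.exact hquot
    have h5 := SmallCovAux.pathLiftEnd_homotopic hq (δ.map pc) (lam.map pc)
      (Path.Homotopic.map hδlam p) f₀ hf₀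
    have h4 : SmallCovAux.pathLiftEnd hq (δ.map pc) f₀ hf₀ = f₀ := by
      have h4' := SmallCovAux.pathLiftEnd_triv hq (δ.map pc) f₀ hf₀ t₀
        (fun u => by simpa using hδU u)
      rw [h4']
      have hh := t₀.symm_apply_mk_proj (t₀.mem_source.2
        (show q f₀ ∈ t₀.baseSet by
          rw [hf₀]; exact (hq (p e₀)).mem_toTrivialization_baseSet))
      rw [hf₀] at hh
      exact hh
    have hsplit : lam.map pc = (β.map pc).trans ((β'.map pc).symm) := by
      rw [hlam, Path.map_trans, ← Path.map_symm]
    have h6 : SmallCovAux.pathLiftEnd hq (lam.map pc) f₀ hf₀ =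
        SmallCovAux.pathLiftEnd hq ((β'.map pc).symm)
          (SmallCovAux.pathLiftEnd hq (β.map pc) f₀ hf₀)
          (SmallCovAux.pathLiftEnd_proj hq (β.map pc) f₀ hf₀) := by
      rw [hsplit]
      exact SmallCovAux.pathLiftEnd_trans hq (β.map pc) ((β'.map pc).symm) f₀ hf₀
    have hcancel := SmallCovAux.pathLiftEnd_symm_cancel hq (β'.map pc)
      (SmallCovAux.pathLiftEnd_proj hq (β.map pc) f₀ hf₀) hf₀
      (h6.symm.trans (h5.symm.trans h4))
    exact hcancel.symm
  -- q ∘ f = p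
  have hqf : ∀ e, q (fdef e) = p e := by
    intro e
    exact SmallCovAux.pathLiftEnd_proj hq ((α e).map pc) f₀ hf₀
  -- continuity of f
  have hcontf : Continuous fdef := by
    rw [continuous_iff_continuousAt]
    intro e
    set t := (hq (p e)).toTrivialization with htdef
    have hNopen : IsOpen (⇑p ⁻¹' t.baseSet) := t.open_baseSet.preimage pc
    have heN : e ∈ ⇑p ⁻¹' t.baseSet := (hq (p e)).mem_toTrivialization_baseSet
    obtain ⟨O, hOopen, heO, hON, hOpc⟩ :=
      SmallCovAux.exists_pc_nhd hp.isLocalHomeomorph e hNopen heN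
    have key : ∀ e' ∈ O, fdef e' = t.toOpenPartialHomeomorph.symm (p e', (t (fdef e)).2) := by
      intro e' he'
      have hjoin : JoinedIn O e e' := hOpc.joinedIn e heO e' he'
      have hβmem : ∀ u, hjoin.somePath u ∈ O := hjoin.somePath_mem
      have h1 : fdef e' = SmallCovAux.pathLiftEnd hq
          (((α e).trans hjoin.somePath).map pc) f₀ hf₀ :=
        hgen e' (α e') ((α e).trans hjoin.somePath)
      rw [Path.map_trans] at h1
      rw [SmallCovAux.pathLiftEnd_trans] at h1
      have h2 : SmallCovAux.pathLiftEnd hq (hjoin.somePath.map pc) (fdef e) (hqf e) =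
          t.toOpenPartialHomeomorph.symm (p e', (t (fdef e)).2) :=
        SmallCovAux.pathLiftEnd_triv hq (hjoin.somePath.map pc) (fdef e) (hqf e) t
          (fun u => by simpa using hON (hβmem u))
      exact h1.trans h2
    have hcO : ContinuousOn (fun e' => t.toOpenPartialHomeomorph.symm (p e', (t (fdef e)).2)) O := by
      refine (t.toOpenPartialHomeomorph.continuousOn_symm).comp
        ((pc.prodMk continuous_const).continuousOn) ?_
      intro e' he'
      exact t.mem_target.2 (hON he')
    exact ((hcO.congr key).continuousAt (hOopen.mem_nhds heO))
  -- surjectivity of f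
  have hfsurj : Function.Surjective fdef := by
    intro w
    set κ : Path f₀ w := PathConnectedSpace.somePath f₀ w with hκ
    set e₁ : E := SmallCovAux.pathLiftEnd hp (κ.map q.continuous) e₀ hf₀.symm with he₁
    refine ⟨e₁, ?_⟩
    have h1 : fdef e₁ = SmallCovAux.pathLiftEnd hq
        ((SmallCovAux.pathLiftPath hp (κ.map q.continuous) e₀ hf₀.symm).map pc) f₀ hf₀ :=
      hgen e₁ (α e₁) (SmallCovAux.pathLiftPath hp (κ.map q.continuous) e₀ hf₀.symm)
    have h2 : SmallCovAux.pathLiftEnd hq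
        ((SmallCovAux.pathLiftPath hp (κ.map q.continuous) e₀ hf₀.symm).map pc) f₀ hf₀ = w := by
      refine SmallCovAux.pathLiftEnd_unique hq _ f₀ hf₀ κ ?_
      intro u
      have := SmallCovAux.pathLiftPath_proj hp (κ.map q.continuous) e₀ hf₀.symm u
      simpa using this.symm
    exact h1.trans h2
  -- the covering map structure on f
  refine ⟨⟨fdef, hcontf⟩, ?_, hqf⟩
  intro y
  show IsEvenlyCovered fdef y (fdef ⁻¹' {y})
  set x : X := q y with hx
  set tp := (hp x).toTrivialization with htp
  set tq := (hq x).toTrivialization with htq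
  have hxp : x ∈ tp.baseSet := (hp x).mem_toTrivialization_baseSet
  have hxq : x ∈ tq.baseSet := (hq x).mem_toTrivialization_baseSet
  haveI : DiscreteTopology ↥(⇑q ⁻¹' {x}) := (hq x).1
  haveI hdiscp : DiscreteTopology ↥(⇑p ⁻¹' {x}) := (hp x).1
  set V := pathComponentIn (tp.baseSet ∩ tq.baseSet) x with hV
  have hVopen : IsOpen V := (tp.open_baseSet.inter tq.open_baseSet).pathComponentIn x
  have hxV : x ∈ V := mem_pathComponentIn_self ⟨hxp, hxq⟩
  have hVpc : IsPathConnected V := isPathConnected_pathComponentIn ⟨hxp, hxq⟩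
  have hVp : V ⊆ tp.baseSet := fun z hz => (pathComponentIn_subset hz).1
  have hVq : V ⊆ tq.baseSet := fun z hz => (pathComponentIn_subset hz).2
  have hysrc : y ∈ tq.source := tq.mem_source.2 hxq
  set j := (tq y).2 with hj
  set W := (⇑q ⁻¹' V) ∩ (tq.source ∩ ⇑tq ⁻¹' (Set.univ ×ˢ ({j} : Set ↥(⇑q ⁻¹' {x})))) with hW
  have hWopen : IsOpen W := (hVopen.preimage q.continuous).inter
    (tq.toOpenPartialHomeomorph.isOpen_inter_preimage (isOpen_univ.prod (isOpen_discrete _)))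
  have hWmem : ∀ w : F, w ∈ W ↔ (q w ∈ V ∧ (tq w).2 = j) := by
    intro w
    constructor
    · rintro ⟨h1, -, h3⟩
      exact ⟨h1, h3.2⟩
    · rintro ⟨h1, h2⟩
      exact ⟨h1, tq.mem_source.2 (hVq h1), ⟨Set.mem_univ _, h2⟩⟩
  have hyW : y ∈ W := (hWmem y).2 ⟨hxV, rfl⟩
  -- sheet coherence
  have hSC : ∀ (i : ↥(⇑p ⁻¹' {x})), ∀ z ∈ V, ∀ z' ∈ V,
      (tq (fdef (tp.toOpenPartialHomeomorph.symm (z, i)))).2 =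
        (tq (fdef (tp.toOpenPartialHomeomorph.symm (z', i)))).2 := by
    intro i z hz z' hz'
    refine (hVpc.isConnected.isPreconnected).constant
      (f := fun z'' => (tq (fdef (tp.toOpenPartialHomeomorph.symm (z'', i)))).2) ?_ hz hz'
    refine continuous_snd.comp_continuousOn ?_
    refine tq.toOpenPartialHomeomorph.continuousOn.comp ?_ ?_
    · refine hcontf.comp_continuousOn ?_
      exact tp.toOpenPartialHomeomorph.continuousOn_symm.comp
        ((continuous_id.prodMk continuous_const).continuousOn)
        (fun z'' hz'' => tp.mem_target.2 (hVp hz''))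
    · intro z'' hz''
      refine tq.mem_source.2 ?_
      rw [hqf _, tp.proj_symm_apply (tp.mem_target.2 (hVp hz''))]
      exact hVq hz''
  have hqval : ∀ (i : ↥(⇑p ⁻¹' {x})), ∀ z ∈ V,
      q (fdef (tp.toOpenPartialHomeomorph.symm (z, i))) = z := by
    intro i z hz
    rw [hqf _]
    exact tp.proj_symm_apply (tp.mem_target.2 (hVp hz))
  have hdet : ∀ a b : F, a ∈ tq.source → b ∈ tq.source → q a = q b →
      (tq a).2 = (tq b).2 → a = b := by
    intro a b ha hb h1 h2
    have e1 : (tq a).1 = q a := tq.coe_fst ha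
    have e2 : (tq b).1 = q b := tq.coe_fst hb
    have hab : tq a = tq b := Prod.ext (by rw [e1, e2, h1]) h2
    exact tq.toOpenPartialHomeomorph.injOn ha hb hab
  have hfibsub : fdef ⁻¹' {y} ⊆ ⇑p ⁻¹' {x} := by
    intro a ha
    have haa : fdef a = y := ha
    show p a ∈ ({x} : Set X)
    rw [Set.mem_singleton_iff, ← hqf a, haa]
  haveI hdisc : DiscreteTopology ↥(fdef ⁻¹' {y}) := DiscreteTopology.of_subset hdiscp hfibsub
  haveI hne : Nonempty ↥(fdef ⁻¹' {y}) := by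
    obtain ⟨a, ha⟩ := hfsurj y
    exact ⟨⟨a, ha⟩⟩
  have hkey : ∀ a : E, a ∈ fdef ⁻¹' W →
      fdef (tp.toOpenPartialHomeomorph.symm (x, (tp a).2)) = y := by
    intro a haW
    obtain ⟨h1, h2⟩ := (hWmem (fdef a)).1 haW
    have hpa : p a ∈ V := by rw [← hqf a]; exact h1
    have hasrc : a ∈ tp.source := tp.mem_source.2 (hVp hpa)
    have haeq : tp.toOpenPartialHomeomorph.symm (p a, (tp a).2) = a := tp.symm_apply_mk_proj hasrc
    have hSC' := hSC (tp a).2 x hxV (p a) hpa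
    rw [haeq] at hSC'
    refine hdet _ _ (tq.mem_source.2 (by rw [hqval _ x hxV]; exact hxq)) hysrc ?_ ?_
    · rw [hqval _ x hxV]
    · rw [hSC', h2]
  -- the trivialization of f over W
  set dd : E → ↥(fdef ⁻¹' {y}) := fun a =>
    if h : fdef (tp.toOpenPartialHomeomorph.symm (x, (tp a).2)) = y
    then ⟨tp.toOpenPartialHomeomorph.symm (x, (tp a).2), h⟩
    else Classical.arbitrary _ with hdd
  have hddmem : ∀ a : E, a ∈ fdef ⁻¹' W →
      (dd a : E) = tp.toOpenPartialHomeomorph.symm (x, (tp a).2) := by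
    intro a haW
    rw [hdd]
    simp only [dif_pos (hkey a haW)]
  have hfibd : ∀ d : ↥(fdef ⁻¹' {y}), p (d : E) = x := fun d => hfibsub d.2
  have hdsrc : ∀ d : ↥(fdef ⁻¹' {y}), (d : E) ∈ tp.source := fun d =>
    tp.mem_source.2 (by rw [hfibd d]; exact hxp)
  have hdeq : ∀ d : ↥(fdef ⁻¹' {y}),
      tp.toOpenPartialHomeomorph.symm (x, (tp (d : E)).2) = (d : E) := by
    intro d
    have hh := tp.symm_apply_mk_proj (hdsrc d)
    rw [hfibd d] at hh
    exact hh
  have hrt : ∀ (w : F) (d : ↥(fdef ⁻¹' {y})), w ∈ W →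
      fdef (tp.toOpenPartialHomeomorph.symm (q w, (tp (d : E)).2)) = w := by
    intro w d hwW
    obtain ⟨h1, h2⟩ := (hWmem w).1 hwW
    have hSC' := hSC (tp (d : E)).2 (q w) h1 x hxV
    rw [hdeq d] at hSC'
    refine hdet _ _ (tq.mem_source.2 (by rw [hqval _ (q w) h1]; exact hVq h1))
      (tq.mem_source.2 (hVq h1)) (hqval _ (q w) h1) ?_
    rw [hSC', d.2, h2]
  have hidxsymm : ∀ (z : X) (i : ↥(⇑p ⁻¹' {x})), z ∈ tp.baseSet →
      (tp (tp.toOpenPartialHomeomorph.symm (z, i))).2 = i := by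
    intro z i hz
    have hh := tp.apply_symm_apply ((tp.mem_target (x := (z, i))).2 hz)
    rw [hh]
  refine IsEvenlyCovered.of_trivialization (t := {
      toFun := fun a => (fdef a, dd a)
      invFun := fun z => tp.toOpenPartialHomeomorph.symm (q z.1, (tp (z.2 : E)).2)
      source := fdef ⁻¹' W
      target := W ×ˢ Set.univ
      map_source' := fun a ha => ⟨ha, Set.mem_univ _⟩
      map_target' := ?_
      left_inv' := ?_
      right_inv' := ?_
      open_source := hWopen.preimage hcontf
      open_target := hWopen.prod isOpen_univ
      continuousOn_toFun := ?_
      continuousOn_invFun := ?_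
      baseSet := W
      open_baseSet := hWopen
      source_eq := rfl
      target_eq := rfl
      proj_toFun := fun a _ => rfl }) hyW
  · rintro ⟨w, d⟩ ⟨hwW, -⟩
    show fdef _ ∈ W
    rw [hrt w d hwW]
    exact hwW
  · intro a haW
    show tp.toOpenPartialHomeomorph.symm (q (fdef a), (tp ((dd a : E))).2) = a
    have hpa : p a ∈ V := by rw [← hqf a]; exact ((hWmem (fdef a)).1 haW).1
    have hasrc : a ∈ tp.source := tp.mem_source.2 (hVp hpa)
    rw [hddmem a haW, hidxsymm x (tp a).2 hxp, hqf a]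
    exact tp.symm_apply_mk_proj hasrc
  · rintro ⟨w, d⟩ ⟨hwW, -⟩
    have h1 : fdef (tp.toOpenPartialHomeomorph.symm (q w, (tp (d : E)).2)) = w := hrt w d hwW
    have hqwV : q w ∈ V := ((hWmem w).1 hwW).1
    have hmemW : tp.toOpenPartialHomeomorph.symm (q w, (tp (d : E)).2) ∈ fdef ⁻¹' W := by
      show fdef _ ∈ W
      rw [h1]
      exact hwW
    refine Prod.ext h1 ?_
    refine Subtype.ext ?_
    rw [hddmem _ hmemW, hidxsymm (q w) (tp (d : E)).2 (hVp hqwV)]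
    exact hdeq d
  · refine (hcontf.continuousOn).prodMk ?_
    rw [continuousOn_iff_continuous_restrict]
    have hrw : ((fdef ⁻¹' W).domRestrict dd) = fun a : ↥(fdef ⁻¹' W) =>
        (⟨tp.toOpenPartialHomeomorph.symm (x, (tp (a : E)).2), hkey (a : E) a.2⟩ :
          ↥(fdef ⁻¹' {y})) := by
      funext a
      exact Subtype.ext (hddmem (a : E) a.2)
    rw [hrw]
    refine Continuous.subtype_mk ?_ _
    have hsub : fdef ⁻¹' W ⊆ tp.source := by
      intro a haW
      have hpa : p a ∈ V := by rw [← hqf a]; exact ((hWmem (fdef a)).1 haW).1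
      exact tp.mem_source.2 (hVp hpa)
    have hcg : ContinuousOn (fun a : E => tp.toOpenPartialHomeomorph.symm (x, (tp a).2))
        (fdef ⁻¹' W) := by
      refine tp.toOpenPartialHomeomorph.continuousOn_symm.comp ?_ ?_
      · exact continuousOn_const.prodMk
          (continuous_snd.comp_continuousOn
            (tp.toOpenPartialHomeomorph.continuousOn.mono hsub))
      · intro a haW
        exact tp.mem_target.2 hxp
    exact continuousOn_iff_continuous_restrict.1 hcg
  · refine tp.toOpenPartialHomeomorph.continuousOn_symm.comp ?_ ?_
    · exact ((q.continuous.comp continuous_fst).prodMk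
        ((continuous_of_discreteTopology
          (f := fun d : ↥(fdef ⁻¹' {y}) => (tp (d : E)).2)).comp continuous_snd)).continuousOn
    · rintro ⟨w, d⟩ ⟨hwW, -⟩
      exact tp.mem_target.2 (hVp ((hWmem w).1 hwW).1)


end
end
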